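/- arXiv:2504.15142 — 6 statements merged into one kernel-verified Lean document; each statement's English description precedes it below -/
import Mathlib

section
/- Let n > 1 be an odd integer. If a (K_2,K_{1,n})-URD(v;1,s) exists with s ≥ 1, then v ≡ 2(n+1) (mod n(n+1)) and s = (v−2)(n+1)/(2n). -/
/-- The edge set of the star with center `p.1` and leaf set `p.2`. -/
def starEdgeSet {V : Type*} [DecidableEq V] (p : V × Finset V) : Finset (Sym2 V) :=
  p.2.image (fun l => s(p.1, l))

/-- `P` is a family of vertex-disjoint `n`-stars (each given by a center and a set of
`n` leaves) whose vertex sets partition the whole vertex set. -/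
def IsStarFactorFamily {V : Type*} [Fintype V] [DecidableEq V] (n : ℕ)
    (P : Finset (V × Finset V)) : Prop :=
  (∀ p ∈ P, p.2.card = n ∧ p.1 ∉ p.2) ∧
  (∀ x : V, ∃! p, p ∈ P ∧ (x = p.1 ∨ x ∈ p.2))

/-- `E` is the edge set of a `K_{1,n}`-factor of the complete graph on `V`. -/
def IsStarFactor {V : Type*} [Fintype V] [DecidableEq V] (n : ℕ)
    (E : Finset (Sym2 V)) : Prop :=
  ∃ P : Finset (V × Finset V), IsStarFactorFamily n P ∧ E = P.biUnion starEdgeSet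

/-- `E` is the edge set of a perfect matching (a `1`-factor, i.e. a `K_2`-factor). -/
def IsOneFactor {V : Type*} [Fintype V] [DecidableEq V] (E : Finset (Sym2 V)) : Prop :=
  (∀ e ∈ E, ¬ e.IsDiag) ∧ ∀ x : V, ∃! e, e ∈ E ∧ x ∈ e

/-- A `(K_2, K_{1,n})`-URD`(v; r, s)`: a partition of the edge set of the complete graph
`K_v` into `r` classes that are `1`-factors and `s` classes that are `K_{1,n}`-factors. -/
def IsURD (n v r s : ℕ) : Prop :=
  ∃ (M : Fin r → Finset (Sym2 (Fin v))) (F : Fin s → Finset (Sym2 (Fin v))),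
    (∀ i, IsOneFactor (M i)) ∧
    (∀ j, IsStarFactor n (F j)) ∧
    (∀ i j, i ≠ j → Disjoint (M i) (M j)) ∧
    (∀ i j, i ≠ j → Disjoint (F i) (F j)) ∧
    (∀ i j, Disjoint (M i) (F j)) ∧
    (∀ e : Sym2 (Fin v),
      (e ∈ Finset.univ.biUnion M ∪ Finset.univ.biUnion F) ↔ ¬ e.IsDiag)

lemma oneFactor_card {V : Type*} [Fintype V] [DecidableEq V] {E : Finset (Sym2 V)}
    (h : IsOneFactor E) : Fintype.card V = 2 * E.card := by
  obtain ⟨hnd, hcov⟩ := h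
  have hU : E.biUnion (fun e => Finset.univ.filter (fun x => x ∈ e))
      = (Finset.univ : Finset V) := by
    apply Finset.eq_univ_of_forall
    intro x
    simp only [Finset.mem_biUnion, Finset.mem_filter, Finset.mem_univ, true_and]
    obtain ⟨e, he, _⟩ := hcov x
    exact ⟨e, he.1, he.2⟩
  have hdisj : ∀ e ∈ E, ∀ e' ∈ E, e ≠ e' →
      Disjoint (Finset.univ.filter (fun x => x ∈ e))
        (Finset.univ.filter (fun x => x ∈ e')) := by
    intro e he e' he' hne
    rw [Finset.disjoint_left]
    intro x hx hx'
    simp only [Finset.mem_filter] at hx hx'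
    obtain ⟨w, _, huniq⟩ := hcov x
    exact hne ((huniq e ⟨he, hx.2⟩).trans (huniq e' ⟨he', hx'.2⟩).symm)
  have hcard2 : ∀ e ∈ E, (Finset.univ.filter (fun x => x ∈ e)).card = 2 := by
    intro e he
    induction e using Sym2.ind with
    | _ a b =>
      have hab : a ≠ b := by
        intro hab; exact hnd _ he (by simp [hab])
      have hset : Finset.univ.filter (fun x => x ∈ s(a,b)) = {a, b} := by
        ext x; simp [Sym2.mem_iff]
      rw [hset, Finset.card_insert_of_notMem (by simp [hab]), Finset.card_singleton]
  have h1 : ∑ e ∈ E, (Finset.univ.filter (fun x => x ∈ e)).card = Fintype.card V := by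
    rw [← Finset.card_biUnion hdisj, hU, Finset.card_univ]
  calc Fintype.card V = ∑ e ∈ E, (Finset.univ.filter (fun x => x ∈ e)).card := h1.symm
    _ = ∑ _e ∈ E, 2 := Finset.sum_congr rfl hcard2
    _ = 2 * E.card := by rw [Finset.sum_const, smul_eq_mul, mul_comm]

lemma starFactor_cards {V : Type*} [Fintype V] [DecidableEq V] {n : ℕ}
    {E : Finset (Sym2 V)} (h : IsStarFactor n E) :
    ∃ t : ℕ, Fintype.card V = (n + 1) * t ∧ E.card = n * t := by
  obtain ⟨P, ⟨hcard, hcov⟩, rfl⟩ := h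
  refine ⟨P.card, ?_, ?_⟩
  · have hU : P.biUnion (fun p => insert p.1 p.2) = (Finset.univ : Finset V) := by
      apply Finset.eq_univ_of_forall
      intro x
      simp only [Finset.mem_biUnion, Finset.mem_insert]
      obtain ⟨p, hp, _⟩ := hcov x
      exact ⟨p, hp.1, hp.2⟩
    have hdisj : ∀ p ∈ P, ∀ q ∈ P, p ≠ q →
        Disjoint (insert p.1 p.2) (insert q.1 q.2) := by
      intro p hp q hq hne
      rw [Finset.disjoint_left]
      intro x hx hx'
      simp only [Finset.mem_insert] at hx hx'
      obtain ⟨w, _, huniq⟩ := hcov x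
      exact hne ((huniq p ⟨hp, hx⟩).trans (huniq q ⟨hq, hx'⟩).symm)
    have h1 : ∑ p ∈ P, (insert p.1 p.2).card = Fintype.card V := by
      rw [← Finset.card_biUnion hdisj, hU, Finset.card_univ]
    calc Fintype.card V = ∑ p ∈ P, (insert p.1 p.2).card := h1.symm
      _ = ∑ _p ∈ P, (n + 1) := Finset.sum_congr rfl (fun p hp => by
          rw [Finset.card_insert_of_notMem (hcard p hp).2, (hcard p hp).1])
      _ = (n + 1) * P.card := by rw [Finset.sum_const, smul_eq_mul, mul_comm]
  · have hdisj : ∀ p ∈ P, ∀ q ∈ P, p ≠ q → Disjoint (starEdgeSet p) (starEdgeSet q) := by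
      intro p hp q hq hne
      rw [Finset.disjoint_left]
      intro e he he'
      simp only [starEdgeSet, Finset.mem_image] at he he'
      obtain ⟨l, hl, rfl⟩ := he
      obtain ⟨l', hl', heq⟩ := he'
      obtain ⟨w, _, huniq⟩ := hcov p.1
      rw [Sym2.eq_iff] at heq
      rcases heq with ⟨h1, _⟩ | ⟨h1, h2⟩
      · exact hne ((huniq p ⟨hp, Or.inl rfl⟩).trans
          (huniq q ⟨hq, Or.inl h1.symm⟩).symm)
      · exact hne ((huniq p ⟨hp, Or.inl rfl⟩).trans
          (huniq q ⟨hq, Or.inr (by rw [← h2]; exact hl')⟩).symm)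
    rw [Finset.card_biUnion hdisj]
    calc ∑ p ∈ P, (starEdgeSet p).card = ∑ _p ∈ P, n := by
          refine Finset.sum_congr rfl (fun p hp => ?_)
          rw [starEdgeSet, Finset.card_image_of_injOn, (hcard p hp).1]
          intro l _ l' _ hll
          exact Sym2.congr_right.mp hll
      _ = n * P.card := by rw [Finset.sum_const, smul_eq_mul, mul_comm]

/-- Necessary conditions: for odd `n > 1`, if a `(K_2, K_{1,n})`-URD`(v; 1, s)` exists
with `s ≥ 1`, then `v ≡ 2(n+1) (mod n(n+1))` and `s = (v-2)(n+1)/(2n)`. -/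
theorem necessary_conditions (n : ℕ) (hn : 1 < n) (hodd : Odd n)
    (v s : ℕ) (hv : 0 < v) (hs : 1 ≤ s) (h : IsURD n v 1 s) :
    v ≡ 2 * (n + 1) [MOD n * (n + 1)] ∧ 2 * n * s = (v - 2) * (n + 1) := by
  obtain ⟨M, F, hM, hF, hMM, hFF, hMF, hcover⟩ := h
  -- matching size
  have hv2 : v = 2 * (M 0).card := by
    have := oneFactor_card (hM 0); rwa [Fintype.card_fin] at this
  set m0 := (M 0).card with hm0
  have hm0pos : 0 < m0 := by omega
  -- star factor sizes
  have hFj : ∀ j, (n + 1) * (F j).card = n * v := by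
    intro j
    obtain ⟨t, ht1, ht2⟩ := starFactor_cards (hF j)
    rw [Fintype.card_fin] at ht1
    rw [ht2, ht1]; ring
  -- total edge count
  have hfilter : (Finset.univ.filter (fun e : Sym2 (Fin v) => ¬ e.IsDiag))
      = Finset.univ.biUnion M ∪ Finset.univ.biUnion F := by
    ext e
    simp only [Finset.mem_filter, Finset.mem_univ, true_and]
    exact (hcover e).symm
  have hdisjMF : Disjoint (Finset.univ.biUnion M) (Finset.univ.biUnion F) := by
    rw [Finset.disjoint_biUnion_left]
    intro i _
    rw [Finset.disjoint_biUnion_right]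
    intro j _
    exact hMF i j
  have hchoose : (Finset.univ.filter (fun e : Sym2 (Fin v) => ¬ e.IsDiag)).card
      = v.choose 2 := by
    have h1 : (Finset.univ.filter (fun e : Sym2 (Fin v) => ¬ e.IsDiag)).card
        = Fintype.card {e : Sym2 (Fin v) // ¬ e.IsDiag} := (Fintype.card_subtype _).symm
    rw [h1, Sym2.card_subtype_not_diag, Fintype.card_fin]
  have hcardM : (Finset.univ.biUnion M).card = m0 := by
    rw [Finset.card_biUnion (fun i _ j _ hij => hMM i j hij)]
    simp [hm0]
  have hcardF : (Finset.univ.biUnion F).card = ∑ j, (F j).card :=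
    Finset.card_biUnion (fun i _ j _ hij => hFF i j hij)
  set T := ∑ j, (F j).card with hT
  have hmain : v.choose 2 = m0 + T := by
    rw [← hchoose, hfilter, Finset.card_union_of_disjoint hdisjMF, hcardM, hcardF]
  have hchoose2 : v.choose 2 = m0 * (v - 1) := by
    rw [Nat.choose_two_right, hv2]
    rw [show 2 * m0 * (2 * m0 - 1) = 2 * (m0 * (2 * m0 - 1)) from by ring]
    rw [Nat.mul_div_cancel_left _ (by norm_num : 0 < 2)]
  -- (n+1) * T = s * n * v
  have hTsum : (n + 1) * T = s * (n * v) := by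
    rw [hT, Finset.mul_sum]
    rw [Finset.sum_congr rfl (fun j _ => hFj j), Finset.sum_const, smul_eq_mul]
    simp
  -- T = m0 * (v - 2)
  have hTval : T = m0 * (v - 2) := by
    have hveq : m0 * (v - 1) = m0 + T := by rw [← hchoose2, hmain]
    have hv1 : v - 1 = (v - 2) + 1 := by omega
    rw [hv1, Nat.mul_add, mul_one, add_comm] at hveq
    omega
  have key : m0 * ((v - 2) * (n + 1)) = m0 * (2 * n * s) := by
    calc m0 * ((v - 2) * (n + 1)) = (n + 1) * (m0 * (v - 2)) := by ring
      _ = (n + 1) * T := by rw [hTval]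
      _ = s * (n * v) := hTsum
      _ = s * (n * (2 * m0)) := by rw [← hv2]
      _ = m0 * (2 * n * s) := by ring
  have heq : 2 * n * s = (v - 2) * (n + 1) :=
    (Nat.eq_of_mul_eq_mul_left hm0pos key).symm
  refine ⟨?_, heq⟩
  -- modular condition
  have hdvd : n ∣ (v - 2) := by
    have h1 : n ∣ (v - 2) * (n + 1) := ⟨2 * s, by rw [← heq]; ring⟩
    exact (Nat.Coprime.dvd_of_dvd_mul_right (show Nat.Coprime n (n+1) by simp) h1)
  obtain ⟨t, ht1, _⟩ := starFactor_cards (hF ⟨0, hs⟩)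
  rw [Fintype.card_fin] at ht1
  have ht2 : 2 ≤ t := by
    rcases Nat.lt_or_ge t 2 with hlt | hge
    · interval_cases t
      · omega
      · have hvn : v - 2 = n - 1 := by omega
        rw [hvn] at hdvd
        have := Nat.le_of_dvd (by omega) hdvd
        omega
    · exact hge
  have hdvdt : n ∣ t - 2 := by
    have hveq : v - 2 = n * t + (t - 2) := by
      have : v = n * t + t := by rw [ht1]; ring
      omega
    rw [hveq] at hdvd
    exact (Nat.dvd_add_right ⟨t, rfl⟩).mp hdvd
  obtain ⟨k, hk⟩ := hdvdt
  have hvform : v = 2 * (n + 1) + n * (n + 1) * k := by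
    have : t = n * k + 2 := by omega
    rw [ht1, this]; ring
  have hle : 2 * (n + 1) ≤ v := by omega
  exact ((Nat.modEq_iff_dvd' hle).mpr ⟨k, by omega⟩).symm
end

section
/- Let n = 2q+1 > 1 be odd and let g = n+2. There exists an almost n-star factor on Z_g (necessarily consisting of a single n-star together with one isolated vertex, since t = 1) such that: every difference d ∈ {1,…,(n+1)/2} is realized at least once by a forward edge of the factor; every difference d ∈ {1,…,(n+1)/2} is realized by at most two edges of the factor; and the n-star consists of q+1 forward edges and q backward edges. -/
/-- The "span" of an edge on `Z_g = {0, 1, …, g-1}`: for `e = {u, v}` with `u < v`,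
this is `v - u`. -/
def pairSpan (g : ℕ) : Sym2 (Fin g) → ℕ :=
  Sym2.lift ⟨fun u v => max u.val v.val - min u.val v.val, by
    intro u v
    simp [Nat.max_comm, Nat.min_comm]⟩

/-- The difference (length) of an edge `e = {u, v}` with `u < v` on `Z_g`:
`D(e) = min (v - u) (g - (v - u))`. -/
def pairDiff (g : ℕ) (e : Sym2 (Fin g)) : ℕ :=
  min (pairSpan g e) (g - pairSpan g e)

/-- `e = {u, v}` with `u < v` is a forward edge when `D(e) = v - u`. -/
def IsForwardEdge (g : ℕ) (e : Sym2 (Fin g)) : Prop :=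
  pairDiff g e = pairSpan g e

/-- `e = {u, v}` with `u < v` is a backward (wrap-around) edge when
`D(e) = g - (v - u)`. -/
def IsBackwardEdge (g : ℕ) (e : Sym2 (Fin g)) : Prop :=
  pairDiff g e = g - pairSpan g e

instance (g : ℕ) : DecidablePred (IsForwardEdge g) :=
  fun e => inferInstanceAs (Decidable (pairDiff g e = pairSpan g e))

instance (g : ℕ) : DecidablePred (IsBackwardEdge g) :=
  fun e => inferInstanceAs (Decidable (pairDiff g e = g - pairSpan g e))

/-- The edge set of a collection of stars, each given by a center and a leaf set. -/
def factorEdges (g : ℕ) (P : Finset (Fin g × Finset (Fin g))) : Finset (Sym2 (Fin g)) :=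
  P.biUnion starEdgeSet

/-- An almost `n`-star factor on `Z_g` (with parameter `t ≡ g (mod n+1)`, `0 ≤ t ≤ n`):
a collection of vertex-disjoint stars whose vertex sets partition `Z_g`, all of which
are `n`-stars except, when `t ≥ 1`, for one little star with `t - 1` leaves. -/
def IsAlmostStarFactor (n g t : ℕ) (P : Finset (Fin g × Finset (Fin g))) : Prop :=
  (∀ p ∈ P, p.1 ∉ p.2) ∧
  (∀ x : Fin g, ∃! p, p ∈ P ∧ (x = p.1 ∨ x ∈ p.2)) ∧
  (if t = 0 then ∀ p ∈ P, p.2.card = n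
   else ∃ L ∈ P, L.2.card = t - 1 ∧ ∀ p ∈ P, p ≠ L → p.2.card = n)

/-- span of an edge from 0. -/
lemma AFZ.span_zero {g : ℕ} (hg : 0 < g) (l : Fin g) :
    pairSpan g s((⟨0, hg⟩ : Fin g), l) = l.val := by
  simp [pairSpan]

lemma AFZ.inj_on {g : ℕ} (hg : 0 < g) {l l' : Fin g}
    (hl : l.val ≠ 0) (h : s((⟨0, hg⟩ : Fin g), l) = s((⟨0, hg⟩ : Fin g), l')) : l = l' := by
  rw [Sym2.eq_iff] at h
  rcases h with ⟨-, h⟩ | ⟨h1, h2⟩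
  · exact h
  · exact absurd (congrArg Fin.val h2) hl

/-- Lemma 3 (k = 0): for odd `n = 2q+1 > 1` and `g = n + 2`, there is an almost
`n`-star factor on `Z_g` (one `n`-star plus an isolated vertex) in which every
difference `d ∈ {1, …, (n+1)/2}` is realized at least once by a forward edge and at
most twice overall, and the `n`-star has `q+1` forward edges and `q` backward edges. -/
theorem almost_factor_k_zero (n q : ℕ) (hq : n = 2 * q + 1) (hn : 1 < n)
    (g : ℕ) (hg : g = n + 2) :
    ∃ P : Finset (Fin g × Finset (Fin g)),
      IsAlmostStarFactor n g 1 P ∧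
      (∀ d, 1 ≤ d → d ≤ (n + 1) / 2 →
        ∃ e ∈ factorEdges g P, pairDiff g e = d ∧ IsForwardEdge g e) ∧
      (∀ d, 1 ≤ d → d ≤ (n + 1) / 2 →
        ((factorEdges g P).filter (fun e => pairDiff g e = d)).card ≤ 2) ∧
      (∀ p ∈ P, p.2.card = n →
        ((starEdgeSet p).filter (fun e => IsForwardEdge g e)).card = q + 1 ∧
        ((starEdgeSet p).filter (fun e => IsBackwardEdge g e)).card = q) := by
  subst hg hq
  have hgpos : 0 < 2 * q + 1 + 2 := by omega
  set N := 2 * q + 1 + 2 with hN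
  have hNval : N = 2 * q + 3 := by omega
  -- the center
  set c : Fin N := ⟨0, hgpos⟩ with hc
  set top : Fin N := ⟨2 * q + 2, by omega⟩ with htop
  have hlv : ∀ m ∈ Finset.Icc 1 (2 * q + 1), m < N := by
    intro m hm; rw [Finset.mem_Icc] at hm; omega
  set leaves : Finset (Fin N) := (Finset.Icc 1 (2 * q + 1)).attachFin hlv with hleaves
  have mem_leaves : ∀ l : Fin N, l ∈ leaves ↔ 1 ≤ l.val ∧ l.val ≤ 2 * q + 1 := by
    intro l; rw [hleaves, Finset.mem_attachFin, Finset.mem_Icc]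
  have card_leaves : leaves.card = 2 * q + 1 := by
    rw [hleaves, Finset.card_attachFin, Nat.card_Icc]; omega
  set A : Fin N × Finset (Fin N) := (c, leaves) with hA
  set B : Fin N × Finset (Fin N) := (top, ∅) with hB
  have hAB : A ≠ B := by
    intro h
    have : c = top := congrArg Prod.fst h
    have := congrArg Fin.val this
    simp [hc, htop] at this
  have hspan : ∀ l : Fin N, pairSpan N s(c, l) = l.val := by
    intro l; rw [hc]; exact AFZ.span_zero hgpos l
  have hdiff : ∀ l : Fin N, pairDiff N s(c, l) = min l.val (N - l.val) := by
    intro l; rw [pairDiff, hspan]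
  have hfwd : ∀ l : Fin N, IsForwardEdge N s(c, l) ↔ l.val ≤ q + 1 := by
    intro l; have := l.isLt; rw [IsForwardEdge, hdiff, hspan]; omega
  have hbwd : ∀ l : Fin N, IsBackwardEdge N s(c, l) ↔ q + 2 ≤ l.val := by
    intro l; have := l.isLt; rw [IsBackwardEdge, hdiff, hspan]; omega
  have hinj : ∀ s : Finset (Fin N), s ⊆ leaves → Set.InjOn (fun l => s(c, l)) s := by
    intro s hs l hl l' hl' h
    simp only at h
    rw [hc] at h
    refine AFZ.inj_on hgpos ?_ h
    have := (mem_leaves l).1 (hs hl); omega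
  refine ⟨{A, B}, ⟨?_, ?_, ?_⟩, ?_, ?_, ?_⟩
  · -- centers not leaves
    intro p hp
    rcases Finset.mem_insert.1 hp with rfl | hp
    · intro hmem
      rw [mem_leaves] at hmem
      simp [hA, hc] at hmem
    · rw [Finset.mem_singleton.1 hp, hB]
      simp
  · -- partition
    intro x
    have hx := x.isLt
    rcases Nat.lt_or_ge x.val 1 with h0 | h1
    · -- x = c
      refine ⟨A, ⟨Finset.mem_insert_self _ _, Or.inl ?_⟩, ?_⟩
      · apply Fin.ext; show x.val = 0; omega
      · intro p ⟨hp, hmem⟩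
        rcases Finset.mem_insert.1 hp with rfl | hp
        · rfl
        · rw [Finset.mem_singleton.1 hp] at hmem ⊢
          rcases hmem with h | h
          · exfalso; have := congrArg Fin.val h; simp [hB, htop] at this; omega
          · simp [hB] at h
    · rcases Nat.lt_or_ge x.val (2 * q + 2) with h2 | h2
      · -- x ∈ leaves
        refine ⟨A, ⟨Finset.mem_insert_self _ _, Or.inr ?_⟩, ?_⟩
        · rw [hA]; rw [mem_leaves]; omega
        · intro p ⟨hp, hmem⟩
          rcases Finset.mem_insert.1 hp with rfl | hp
          · rfl
          · rw [Finset.mem_singleton.1 hp] at hmem ⊢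
            rcases hmem with h | h
            · exfalso; have := congrArg Fin.val h; simp [hB, htop] at this; omega
            · simp [hB] at h
      · -- x = top
        refine ⟨B, ⟨Finset.mem_insert_of_mem (Finset.mem_singleton_self _), Or.inl ?_⟩, ?_⟩
        · apply Fin.ext; simp [hB, htop]; omega
        · intro p ⟨hp, hmem⟩
          rcases Finset.mem_insert.1 hp with rfl | hp
          · exfalso
            rcases hmem with h | h
            · have : x.val = 0 := congrArg Fin.val h; omega
            · rw [hA] at h; rw [mem_leaves] at h; omega
          · exact Finset.mem_singleton.1 hp
  · -- little star condition
    simp only [if_neg (by norm_num : (1:ℕ) ≠ 0)]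
    refine ⟨B, Finset.mem_insert_of_mem (Finset.mem_singleton_self _), by simp [hB], ?_⟩
    intro p hp hpB
    rcases Finset.mem_insert.1 hp with rfl | hp
    · rw [hA]; exact card_leaves
    · exact absurd (Finset.mem_singleton.1 hp) hpB
  · -- existence of forward edge of each difference
    have hedges : factorEdges N {A, B} = leaves.image (fun l => s(c, l)) := by
      rw [factorEdges, Finset.biUnion_insert]
      simp [starEdgeSet, hA, hB]
    intro d hd1 hd2
    have hd2' : d ≤ q + 1 := by omega
    set ld : Fin N := ⟨d, by omega⟩ with hld
    have hldv : ld.val = d := rfl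
    refine ⟨s(c, ld), ?_, ?_, ?_⟩
    · rw [hedges]
      exact Finset.mem_image_of_mem _ ((mem_leaves ld).2 ⟨by omega, by omega⟩)
    · rw [hdiff]; omega
    · rw [hfwd]; omega
  · -- each difference at most twice
    have hedges : factorEdges N {A, B} = leaves.image (fun l => s(c, l)) := by
      rw [factorEdges, Finset.biUnion_insert]
      simp [starEdgeSet, hA, hB]
    intro d hd1 hd2
    rw [hedges, Finset.filter_image]
    refine le_trans Finset.card_image_le ?_
    have hsub : leaves.filter (fun l => pairDiff N s(c, l) = d) ⊆
        {(⟨d, by omega⟩ : Fin N), ⟨N - d, by omega⟩} := by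
      intro l hl
      rw [Finset.mem_filter, hdiff] at hl
      have hlt := l.isLt
      rcases hl with ⟨-, hmin⟩
      have : l.val = d ∨ l.val = N - d := by omega
      rcases this with h | h <;>
        simp [Finset.mem_insert, Finset.mem_singleton, Fin.ext_iff, h]
    exact le_trans (Finset.card_le_card hsub) ((Finset.card_insert_le _ _).trans (by simp))
  · -- forward/backward edge counts of the big star
    intro p hp hcard
    rcases Finset.mem_insert.1 hp with rfl | hp
    · have hstar : starEdgeSet A = leaves.image (fun l => s(c, l)) := by
        simp [starEdgeSet, hA]
      constructor
      · rw [hstar, Finset.filter_image,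
          Finset.card_image_of_injOn (hinj _ (Finset.filter_subset _ _))]
        have heq : leaves.filter (fun l => IsForwardEdge N s(c, l)) =
            (Finset.Icc 1 (q + 1)).attachFin
              (by intro m hm; rw [Finset.mem_Icc] at hm; omega) := by
          ext l
          rw [Finset.mem_filter, mem_leaves l, hfwd l, Finset.mem_attachFin, Finset.mem_Icc]
          omega
        rw [heq, Finset.card_attachFin, Nat.card_Icc]
        omega
      · rw [hstar, Finset.filter_image,
          Finset.card_image_of_injOn (hinj _ (Finset.filter_subset _ _))]
        have heq : leaves.filter (fun l => IsBackwardEdge N s(c, l)) =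
            (Finset.Icc (q + 2) (2 * q + 1)).attachFin
              (by intro m hm; rw [Finset.mem_Icc] at hm; omega) := by
          ext l
          rw [Finset.mem_filter, mem_leaves l, hbwd l, Finset.mem_attachFin, Finset.mem_Icc]
          omega
        rw [heq, Finset.card_attachFin, Nat.card_Icc]
        omega
    · exfalso
      rw [Finset.mem_singleton.1 hp, hB] at hcard
      simp at hcard
end

section
/- Let n = 2q+1 > 1 be odd, let k be an integer with 1 ≤ k ≤ q, let g = 2nk+n+2, let μ = (2nk+n+1)/2, and let w be the unique integer with 1 ≤ w ≤ n+1 and w ≡ μ+1 (mod n+1). There exists an almost n-star factor on Z_g admitting an admissible pure/prime labeling such that: every difference d ∈ {1,…,μ} is realized by its pure edge, which is a forward edge; every difference d ∈ {1,…,μ} is realized by at most two edges of the factor; exactly one star is a mixed star, and it has q+1 pure edges and q prime edges, of which w−1 are backward edges and q−(w−1) are forward edges; and the little star has t−1 leaves, where t is the unique integer with 0 ≤ t ≤ n and t ≡ g (mod n+1). -/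
/-- An admissible pure/prime labeling of the edge set `E` of an almost star factor,
given by the subset `Pure ⊆ E` of pure edges (the rest are prime): every difference
realized by `E` is realized by exactly one pure edge and at most one prime edge. -/
def IsAdmissibleLabeling (g : ℕ) (E Pure : Finset (Sym2 (Fin g))) : Prop :=
  Pure ⊆ E ∧
  ∀ d : ℕ, (∃ e ∈ E, pairDiff g e = d) →
    (Pure.filter (fun e => pairDiff g e = d)).card = 1 ∧
    ((E \ Pure).filter (fun e => pairDiff g e = d)).card ≤ 1

/-- A star is mixed (w.r.t. the set `Pure` of pure edges) if it contains both a pure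
edge and a prime edge. -/
def IsMixedStar (g : ℕ) (Pure : Finset (Sym2 (Fin g)))
    (p : Fin g × Finset (Fin g)) : Prop :=
  (starEdgeSet p ∩ Pure).Nonempty ∧ (starEdgeSet p \ Pure).Nonempty

namespace L4

def nn (a c : ℕ) : ℕ := 2*a+2*c+3
def gg (a c : ℕ) : ℕ := 2*(nn a c)*(c+1) + nn a c + 2
def mu (a c : ℕ) : ℕ := nn a c*(c+1)+c+a+2
def bb (a c : ℕ) : ℕ := mu a c + a + 2

lemma gg_eq (a c : ℕ) : gg a c = 2*mu a c + 1 := by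
  simp only [gg, mu, nn]; ring

lemma two_mu_eq (a c : ℕ) : 2*mu a c = bb a c + nn a c + c*(nn a c+1) := by
  simp only [mu, bb, nn]; ring

def vv (g : ℕ) (h : 0 < g) (v : ℕ) : Fin g := ⟨v % g, Nat.mod_lt _ h⟩

lemma vv_val {g : ℕ} (h : 0 < g) {v : ℕ} (hv : v < g) : (vv g h v).val = v :=
  Nat.mod_eq_of_lt hv

lemma vv_inj {g : ℕ} {h : 0 < g} {v w : ℕ} (hv : v < g) (hw : w < g) :
    vv g h v = vv g h w ↔ v = w := by
  constructor
  · intro he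
    have := congrArg Fin.val he
    rwa [vv_val h hv, vv_val h hw] at this
  · rintro rfl; rfl

lemma span_vv {g : ℕ} (h : 0 < g) {v w : ℕ} (hv : v < g) (hw : w < g) :
    pairSpan g s(vv g h v, vv g h w) = max v w - min v w := by
  simp only [pairSpan, Sym2.lift_mk, vv_val h hv, vv_val h hw]

lemma edge_eq_iff {g : ℕ} (h : 0 < g) {x y z w : ℕ} (hx : x < g) (hy : y < g)
    (hz : z < g) (hw : w < g) :
    s(vv g h x, vv g h y) = s(vv g h z, vv g h w) ↔ (x = z ∧ y = w) ∨ (x = w ∧ y = z) := by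
  rw [Sym2.eq_iff]
  rw [vv_inj hx hz, vv_inj hy hw, vv_inj hx hw, vv_inj hy hz]

-- diff of an edge with v ≤ w, in terms of span
lemma diff_vv {g : ℕ} (h : 0 < g) {v w : ℕ} (hv : v < g) (hw : w < g) (hvw : v ≤ w) :
    pairDiff g s(vv g h v, vv g h w) = min (w - v) (g - (w - v)) := by
  rw [pairDiff, span_vv h hv hw]
  congr 1 <;> omega

lemma fwd_vv {g a c : ℕ} (h : 0 < g) (hgg : g = gg a c) {v w : ℕ} (hv : v < g) (hw : w < g)
    (hvw : v ≤ w) (hspan : w - v ≤ mu a c) :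
    IsForwardEdge g s(vv g h v, vv g h w) ∧ pairDiff g s(vv g h v, vv g h w) = w - v := by
  have hge := gg_eq a c
  have h1 : pairSpan g s(vv g h v, vv g h w) = w - v := by
    rw [span_vv h hv hw]; omega
  have h2 : pairDiff g s(vv g h v, vv g h w) = w - v := by
    rw [pairDiff, h1]; omega
  exact ⟨h2.trans h1.symm, h2⟩

lemma bwd_vv {g a c : ℕ} (h : 0 < g) (hgg : g = gg a c) {v w : ℕ} (hv : v < g) (hw : w < g)
    (hvw : v ≤ w) (hspan : mu a c < w - v) :
    IsBackwardEdge g s(vv g h v, vv g h w) ∧ ¬ IsForwardEdge g s(vv g h v, vv g h w)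
      ∧ pairDiff g s(vv g h v, vv g h w) = g - (w - v) := by
  have hge := gg_eq a c
  have h1 : pairSpan g s(vv g h v, vv g h w) = w - v := by
    rw [span_vv h hv hw]; omega
  have h2 : pairDiff g s(vv g h v, vv g h w) = g - (w-v) := by
    rw [pairDiff, h1]; omega
  refine ⟨h2.trans (by rw [h1]), ?_, h2⟩
  intro hf
  rw [IsForwardEdge, h1, h2] at hf
  omega

lemma diff_bounds {g a c : ℕ} (h : 0 < g) (hgg : g = gg a c) {v w : ℕ} (hv : v < g) (hw : w < g)
    (hne : v ≠ w) : 1 ≤ pairDiff g s(vv g h v, vv g h w) ∧ pairDiff g s(vv g h v, vv g h w) ≤ mu a c := by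
  have hge := gg_eq a c
  rw [pairDiff, span_vv h hv hw]
  omega




lemma mulle {x y m : ℕ} (h : x ≤ y) : x*m ≤ y*m := Nat.mul_le_mul_right m h
lemma mullt {x y m : ℕ} (h : x < y) : x*m + m ≤ y*m := by
  have h1 : (x+1)*m ≤ y*m := Nat.mul_le_mul_right m h
  have h2 : (x+1)*m = x*m + m := by ring
  omega

lemma basics (a c : ℕ) :
    nn a c = 2*a+2*c+3 ∧ mu a c = nn a c*(c+1)+c+a+2 ∧ bb a c = mu a c+a+2 ∧
    gg a c = 2*mu a c+1 ∧ nn a c*(c+1) = c*nn a c + nn a c ∧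
    2*mu a c = bb a c + nn a c + c*(nn a c+1) ∧ c*(nn a c+1) = c*nn a c + c := by
  refine ⟨rfl, rfl, rfl, ?_, by ring, ?_, by ring⟩
  · simp only [gg, mu, nn]; ring
  · simp only [mu, bb, nn]; ring

def mixBack (a c : ℕ) : Finset ℕ := Finset.Ico (nn a c*(c+1)+c+1) (nn a c*(c+1)+c+a+2)
def mixFwd (a c : ℕ) : Finset ℕ := Finset.Ico (bb a c) (bb a c + c)
def mixPure (a c : ℕ) : Finset ℕ :=
  Finset.Ico (mu a c) (mu a c + a + 2) ∪
    (Finset.range c).image (fun u => bb a c + nn a c + u*(nn a c+1))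
def mixLvs (a c : ℕ) : Finset ℕ := mixBack a c ∪ mixFwd a c ∪ mixPure a c

def pureS (a c s : ℕ) : ℕ × Finset ℕ :=
  (c - s, Finset.Ico (c+1+s*nn a c) (c+1+s*nn a c+nn a c))
def primeS (a c u : ℕ) : ℕ × Finset ℕ :=
  (bb a c + c + u,
   Finset.Ico (bb a c+nn a c+u*(nn a c+1)+1) (bb a c+nn a c+u*(nn a c+1)+nn a c+1))
def litS (a c : ℕ) : ℕ × Finset ℕ :=
  (bb a c + 2*c, Finset.Ico (bb a c+2*c+1) (bb a c+nn a c))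
def mixS (a c : ℕ) : ℕ × Finset ℕ := (2*mu a c, mixLvs a c)

/-- the owner star of a vertex -/
def own (a c v : ℕ) : ℕ × Finset ℕ :=
  if v ≤ c then pureS a c (c - v)
  else if v < nn a c*(c+1)+c+1 then pureS a c ((v-(c+1))/nn a c)
  else if v < bb a c + c then mixS a c
  else if v < bb a c + 2*c then primeS a c (v-(bb a c+c))
  else if v < bb a c + nn a c then litS a c
  else if (nn a c+1) ∣ (v - (bb a c+nn a c)) then mixS a c
  else primeS a c ((v - (bb a c+nn a c)) / (nn a c+1))

/-- cover: each vertex belongs to its owner -/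
lemma own_contains (a c v : ℕ) (hv : v < gg a c) :
    v = (own a c v).1 ∨ v ∈ (own a c v).2 := by
  obtain ⟨e1,e2,e3,e4,e5,e6,e7⟩ := basics a c
  unfold own
  split_ifs with h1 h2 h3 h4 h5 h6
  · left; simp [pureS]; omega
  · right
    simp only [pureS, Finset.mem_Ico]
    have hd := Nat.div_add_mod (v-(c+1)) (nn a c)
    have hm : (v-(c+1)) % nn a c < nn a c := Nat.mod_lt _ (by omega)
    set s := (v-(c+1))/nn a c with hs
    have hb : s * nn a c = nn a c * s := Nat.mul_comm _ _
    have hub : s ≤ c := by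
      by_contra hgt
      have := mullt (m := nn a c) (show c < s by omega)
      omega
    have := mulle (m := nn a c) hub
    omega
  · right
    simp only [mixS, mixLvs, mixBack, mixFwd, mixPure, Finset.mem_union, Finset.mem_Ico]
    omega
  · left; simp [primeS]; omega
  · rcases eq_or_ne v (bb a c + 2*c) with hvv | hvv
    · left; simp [litS, hvv]
    · right; simp only [litS, Finset.mem_Ico]; omega
  · -- hole or mix center
    obtain ⟨u, hu⟩ := h6
    have hb : (nn a c+1) * u = u * (nn a c+1) := Nat.mul_comm _ _
    rcases Nat.lt_or_ge u c with hc | hc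
    · right
      simp only [mixS, mixLvs, mixBack, mixFwd, mixPure, Finset.mem_union, Finset.mem_Ico,
        Finset.mem_image, Finset.mem_range]
      exact Or.inr (Or.inr ⟨u, hc, by omega⟩)
    · left
      simp only [mixS]
      have := mulle (m := nn a c+1) hc
      omega
  · right
    simp only [primeS, Finset.mem_Ico]
    have hd := Nat.div_add_mod (v-(bb a c+nn a c)) (nn a c+1)
    have hm : (v-(bb a c+nn a c)) % (nn a c+1) < nn a c+1 := Nat.mod_lt _ (by omega)
    have hm0 : (v-(bb a c+nn a c)) % (nn a c+1) ≠ 0 := by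
      intro h0
      exact h6 (Nat.dvd_of_mod_eq_zero h0)
    set u := (v - (bb a c+nn a c)) / (nn a c+1) with hu
    have hb : u * (nn a c+1) = (nn a c+1) * u := Nat.mul_comm _ _
    omega

/-- which stars exist -/
lemma own_shape (a c v : ℕ) (hv : v < gg a c) :
    (∃ s, s ≤ c ∧ own a c v = pureS a c s) ∨ (∃ u, u < c ∧ own a c v = primeS a c u) ∨
    own a c v = litS a c ∨ own a c v = mixS a c := by
  obtain ⟨e1,e2,e3,e4,e5,e6,e7⟩ := basics a c
  unfold own
  split_ifs with h1 h2 h3 h4 h5 h6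
  · exact Or.inl ⟨c - v, by omega, rfl⟩
  · refine Or.inl ⟨(v-(c+1))/nn a c, ?_, rfl⟩
    have hd := Nat.div_add_mod (v-(c+1)) (nn a c)
    set s := (v-(c+1))/nn a c with hs
    by_contra hgt
    have h8 := mullt (m := nn a c) (show c < s by omega)
    have hb : s * nn a c = nn a c * s := Nat.mul_comm _ _
    omega
  · exact Or.inr (Or.inr (Or.inr rfl))
  · exact Or.inr (Or.inl ⟨v - (bb a c + c), by omega, rfl⟩)
  · exact Or.inr (Or.inr (Or.inl rfl))
  · exact Or.inr (Or.inr (Or.inr rfl))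
  · refine Or.inr (Or.inl ⟨(v - (bb a c+nn a c)) / (nn a c+1), ?_, rfl⟩)
    have hd := Nat.div_add_mod (v-(bb a c+nn a c)) (nn a c+1)
    set u := (v - (bb a c+nn a c)) / (nn a c+1) with hu
    by_contra hgt
    have h8 := mulle (m := nn a c+1) (show c ≤ u by omega)
    have hb : u * (nn a c+1) = (nn a c+1) * u := Nat.mul_comm _ _
    omega


/-! ## ownership uniqueness -/

lemma own_pure (a c s v : ℕ) (hs : s ≤ c)
    (hmem : v = (pureS a c s).1 ∨ v ∈ (pureS a c s).2) : own a c v = pureS a c s := by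
  obtain ⟨e1,e2,e3,e4,e5,e6,e7⟩ := basics a c
  rcases hmem with hc | hl
  · simp only [pureS] at hc
    unfold own
    rw [if_pos (by omega : v ≤ c)]
    congr 1
    omega
  · simp only [pureS, Finset.mem_Ico] at hl
    have hsb := mulle (m := nn a c) hs
    have hq : (v-(c+1))/nn a c = s := by
      refine Nat.div_eq_of_lt_le (by omega) ?_
      have : (s+1)*nn a c = s*nn a c + nn a c := by ring
      omega
    unfold own
    rw [if_neg (by omega), if_pos (by omega), hq]

lemma own_prime (a c u v : ℕ) (hu : u < c)
    (hmem : v = (primeS a c u).1 ∨ v ∈ (primeS a c u).2) : own a c v = primeS a c u := by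
  obtain ⟨e1,e2,e3,e4,e5,e6,e7⟩ := basics a c
  rcases hmem with hc | hl
  · simp only [primeS] at hc
    unfold own
    rw [if_neg (by omega), if_neg (by omega), if_neg (by omega), if_pos (by omega)]
    congr 1
    omega
  · simp only [primeS, Finset.mem_Ico] at hl
    have hub := mulle (m := nn a c+1) (show u ≤ c by omega)
    have hnd : ¬ (nn a c+1) ∣ (v - (bb a c+nn a c)) := by
      rintro ⟨m, hm⟩
      have hcm : (nn a c+1) * m = m * (nn a c+1) := Nat.mul_comm _ _
      rcases le_or_gt m u with h' | h'
      · have := mulle (m := nn a c+1) h'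
        omega
      · have := mullt (m := nn a c+1) h'
        omega
    have hq : (v - (bb a c+nn a c))/(nn a c+1) = u := by
      refine Nat.div_eq_of_lt_le (by omega) ?_
      have : (u+1)*(nn a c+1) = u*(nn a c+1) + nn a c+1 := by ring
      omega
    unfold own
    rw [if_neg (by omega), if_neg (by omega), if_neg (by omega), if_neg (by omega),
      if_neg (by omega), if_neg hnd, hq]

lemma own_lit (a c v : ℕ)
    (hmem : v = (litS a c).1 ∨ v ∈ (litS a c).2) : own a c v = litS a c := by
  obtain ⟨e1,e2,e3,e4,e5,e6,e7⟩ := basics a c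
  have hv : bb a c + 2*c ≤ v ∧ v < bb a c + nn a c := by
    rcases hmem with hc | hl
    · simp only [litS] at hc; omega
    · simp only [litS, Finset.mem_Ico] at hl; omega
  unfold own
  rw [if_neg (by omega), if_neg (by omega), if_neg (by omega), if_neg (by omega),
    if_pos (by omega)]

lemma own_mix (a c v : ℕ)
    (hmem : v = (mixS a c).1 ∨ v ∈ (mixS a c).2) : own a c v = mixS a c := by
  obtain ⟨e1,e2,e3,e4,e5,e6,e7⟩ := basics a c
  rcases hmem with hc | hl
  · simp only [mixS] at hc
    unfold own
    rw [if_neg (by omega), if_neg (by omega), if_neg (by omega), if_neg (by omega),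
      if_neg (by omega), if_pos ⟨c, by have hx : (nn a c+1)*c = c*(nn a c+1) := Nat.mul_comm _ _; omega⟩]
  · simp only [mixS, mixLvs, mixBack, mixFwd, mixPure, Finset.mem_union, Finset.mem_Ico,
      Finset.mem_image, Finset.mem_range] at hl
    rcases hl with (h' | h') | (h' | ⟨u, hu, h'⟩)
    · unfold own
      rw [if_neg (by omega), if_neg (by omega), if_pos (by omega)]
    · unfold own
      rw [if_neg (by omega), if_neg (by omega), if_pos (by omega)]
    · unfold own
      rw [if_neg (by omega), if_neg (by omega), if_pos (by omega)]
    · have hub := mulle (m := nn a c+1) (show u ≤ c by omega)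
      unfold own
      rw [if_neg (by omega), if_neg (by omega), if_neg (by omega), if_neg (by omega),
        if_neg (by omega), if_pos ⟨u, by have hx : (nn a c+1)*u = u*(nn a c+1) := Nat.mul_comm _ _; omega⟩]

/-! ## bounds: all vertices of each star are < gg -/

lemma pure_bound (a c s v : ℕ) (hs : s ≤ c)
    (hmem : v = (pureS a c s).1 ∨ v ∈ (pureS a c s).2) : v < gg a c := by
  obtain ⟨e1,e2,e3,e4,e5,e6,e7⟩ := basics a c
  have hsb := mulle (m := nn a c) hs
  rcases hmem with h' | h' <;> simp only [pureS, Finset.mem_Ico] at h' <;> omega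

lemma prime_bound (a c u v : ℕ) (hu : u < c)
    (hmem : v = (primeS a c u).1 ∨ v ∈ (primeS a c u).2) : v < gg a c := by
  obtain ⟨e1,e2,e3,e4,e5,e6,e7⟩ := basics a c
  have hub := mullt (m := nn a c+1) hu
  rcases hmem with h' | h' <;> simp only [primeS, Finset.mem_Ico] at h' <;> omega

lemma lit_bound (a c v : ℕ)
    (hmem : v = (litS a c).1 ∨ v ∈ (litS a c).2) : v < gg a c := by
  obtain ⟨e1,e2,e3,e4,e5,e6,e7⟩ := basics a c
  rcases hmem with h' | h' <;> simp only [litS, Finset.mem_Ico] at h' <;> omega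

lemma mix_bound (a c v : ℕ)
    (hmem : v = (mixS a c).1 ∨ v ∈ (mixS a c).2) : v < gg a c := by
  obtain ⟨e1,e2,e3,e4,e5,e6,e7⟩ := basics a c
  rcases hmem with h' | h'
  · simp only [mixS] at h'; omega
  · simp only [mixS, mixLvs, mixBack, mixFwd, mixPure, Finset.mem_union, Finset.mem_Ico,
      Finset.mem_image, Finset.mem_range] at h'
    rcases h' with (h' | h') | (h' | ⟨u, hu, h'⟩)
    · omega
    · omega
    · omega
    · have hub := mullt (m := nn a c+1) hu
      omega

/-! ## centers not in leaf sets; leaf bounds relative to centers -/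

lemma pure_notMem (a c s : ℕ) (hs : s ≤ c) : (pureS a c s).1 ∉ (pureS a c s).2 := by
  obtain ⟨e1,e2,e3,e4,e5,e6,e7⟩ := basics a c
  simp only [pureS, Finset.mem_Ico]
  omega

lemma prime_notMem (a c u : ℕ) (hu : u < c) : (primeS a c u).1 ∉ (primeS a c u).2 := by
  obtain ⟨e1,e2,e3,e4,e5,e6,e7⟩ := basics a c
  simp only [primeS, Finset.mem_Ico]
  omega

lemma lit_notMem (a c : ℕ) : (litS a c).1 ∉ (litS a c).2 := by
  simp only [litS, Finset.mem_Ico]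
  omega

lemma mix_notMem (a c : ℕ) : (mixS a c).1 ∉ (mixS a c).2 := by
  obtain ⟨e1,e2,e3,e4,e5,e6,e7⟩ := basics a c
  simp only [mixS, mixLvs, mixBack, mixFwd, mixPure, Finset.mem_union, Finset.mem_Ico,
    Finset.mem_image, Finset.mem_range]
  push_neg
  refine ⟨⟨by omega, by omega⟩, by omega, fun u hu => ?_⟩
  have hub := mullt (m := nn a c+1) hu
  omega


/-! ## cardinalities -/

lemma holes_injOn (a c : ℕ) : Set.InjOn (fun u => bb a c + nn a c + u*(nn a c+1))
    (Finset.range c : Finset ℕ) := by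
  intro x _ y _ hxy
  simp only at hxy
  rcases lt_trichotomy x y with h | h | h
  · have := mullt (m := nn a c+1) h; omega
  · exact h
  · have := mullt (m := nn a c+1) h; omega

lemma card_pure_lvs (a c s : ℕ) : (pureS a c s).2.card = nn a c := by
  simp [pureS]

lemma card_prime_lvs (a c u : ℕ) : (primeS a c u).2.card = nn a c := by
  simp [primeS]

lemma card_lit_lvs (a c : ℕ) : (litS a c).2.card = 2*a+2 := by
  obtain ⟨e1,e2,e3,e4,e5,e6,e7⟩ := basics a c
  simp [litS]
  omega

lemma disj_BF_P (a c : ℕ) : Disjoint (mixBack a c ∪ mixFwd a c) (mixPure a c) := by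
  obtain ⟨e1,e2,e3,e4,e5,e6,e7⟩ := basics a c
  rw [Finset.disjoint_left]
  intro x hx hx'
  simp only [mixBack, mixFwd, mixPure, Finset.mem_union, Finset.mem_Ico,
    Finset.mem_image, Finset.mem_range] at hx hx'
  rcases hx' with h' | ⟨u, hu, h'⟩
  · omega
  · rcases hx with h | h <;> omega

lemma disj_B_F (a c : ℕ) : Disjoint (mixBack a c) (mixFwd a c) := by
  obtain ⟨e1,e2,e3,e4,e5,e6,e7⟩ := basics a c
  rw [Finset.disjoint_left]
  intro x hx hx'
  simp only [mixBack, mixFwd, Finset.mem_Ico] at hx hx'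
  omega

lemma disj_I_H (a c : ℕ) :
    Disjoint (Finset.Ico (mu a c) (mu a c + a + 2))
      ((Finset.range c).image (fun u => bb a c + nn a c + u*(nn a c+1))) := by
  obtain ⟨e1,e2,e3,e4,e5,e6,e7⟩ := basics a c
  rw [Finset.disjoint_left]
  intro x hx hx'
  simp only [Finset.mem_Ico, Finset.mem_image, Finset.mem_range] at hx hx'
  obtain ⟨u, hu, h'⟩ := hx'
  omega

lemma card_mixPure (a c : ℕ) : (mixPure a c).card = a+2+c := by
  rw [mixPure, Finset.card_union_of_disjoint (disj_I_H a c),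
    Finset.card_image_of_injOn (holes_injOn a c)]
  simp
  omega

lemma card_mix_lvs (a c : ℕ) : (mixS a c).2.card = nn a c := by
  obtain ⟨e1,e2,e3,e4,e5,e6,e7⟩ := basics a c
  show (mixLvs a c).card = nn a c
  rw [mixLvs, Finset.card_union_of_disjoint (disj_BF_P a c),
    Finset.card_union_of_disjoint (disj_B_F a c), card_mixPure]
  simp [mixBack, mixFwd]
  omega


/-! ## Fin-level structures -/

def FF (g : ℕ) (h : 0 < g) (p : ℕ × Finset ℕ) : Fin g × Finset (Fin g) :=
  (vv g h p.1, p.2.image (vv g h))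

def PP (a c g : ℕ) (h : 0 < g) : Finset (Fin g × Finset (Fin g)) :=
  ((Finset.range (c+1)).image (fun s => FF g h (pureS a c s))) ∪
  ((Finset.range c).image (fun u => FF g h (primeS a c u))) ∪
  {FF g h (litS a c), FF g h (mixS a c)}

def medge (a c g : ℕ) (h : 0 < g) (l : ℕ) : Sym2 (Fin g) :=
  s(vv g h (2*mu a c), vv g h l)

def PureE (a c g : ℕ) (h : 0 < g) : Finset (Sym2 (Fin g)) :=
  (Finset.range (c+1)).biUnion (fun s => starEdgeSet (FF g h (pureS a c s))) ∪
  (mixPure a c).image (medge a c g h)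

def PrimeE (a c g : ℕ) (h : 0 < g) : Finset (Sym2 (Fin g)) :=
  ((Finset.range c).biUnion (fun u => starEdgeSet (FF g h (primeS a c u))) ∪
   starEdgeSet (FF g h (litS a c))) ∪
  (mixBack a c ∪ mixFwd a c).image (medge a c g h)

lemma starEdgeSet_FF (g : ℕ) (h : 0 < g) (p : ℕ × Finset ℕ) :
    starEdgeSet (FF g h p) = p.2.image (fun l => s(vv g h p.1, vv g h l)) := by
  simp only [starEdgeSet, FF, Finset.image_image]
  rfl

lemma mem_PP {a c g : ℕ} {h : 0 < g} {p : Fin g × Finset (Fin g)} :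
    p ∈ PP a c g h ↔ (∃ s, s ≤ c ∧ FF g h (pureS a c s) = p) ∨
      (∃ u, u < c ∧ FF g h (primeS a c u) = p) ∨
      p = FF g h (litS a c) ∨ p = FF g h (mixS a c) := by
  simp only [PP, Finset.mem_union, Finset.mem_image, Finset.mem_range, Finset.mem_insert,
    Finset.mem_singleton, Nat.lt_succ_iff]
  constructor
  · rintro ((⟨s, hs, he⟩ | ⟨u, hu, he⟩) | he | he)
    · exact Or.inl ⟨s, hs, he⟩
    · exact Or.inr (Or.inl ⟨u, hu, he⟩)
    · exact Or.inr (Or.inr (Or.inl he))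
    · exact Or.inr (Or.inr (Or.inr he))
  · rintro (⟨s, hs, he⟩ | ⟨u, hu, he⟩ | he | he)
    · exact Or.inl (Or.inl ⟨s, hs, he⟩)
    · exact Or.inl (Or.inr ⟨u, hu, he⟩)
    · exact Or.inr (Or.inl he)
    · exact Or.inr (Or.inr he)

lemma mem_PureE {a c g : ℕ} {h : 0 < g} {e : Sym2 (Fin g)} :
    e ∈ PureE a c g h ↔
      (∃ s, s ≤ c ∧ ∃ l ∈ (pureS a c s).2, e = s(vv g h (c - s), vv g h l)) ∨
      (∃ l ∈ mixPure a c, e = medge a c g h l) := by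
  simp only [PureE, Finset.mem_union, Finset.mem_biUnion, Finset.mem_range, Nat.lt_succ_iff,
    starEdgeSet_FF, Finset.mem_image, pureS]
  constructor
  · rintro (⟨s, hs, l, hl, he⟩ | ⟨l, hl, he⟩)
    · exact Or.inl ⟨s, hs, l, hl, he.symm⟩
    · exact Or.inr ⟨l, hl, he.symm⟩
  · rintro (⟨s, hs, l, hl, he⟩ | ⟨l, hl, he⟩)
    · exact Or.inl ⟨s, hs, l, hl, he.symm⟩
    · exact Or.inr ⟨l, hl, he.symm⟩

lemma mem_PrimeE {a c g : ℕ} {h : 0 < g} {e : Sym2 (Fin g)} :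
    e ∈ PrimeE a c g h ↔
      (∃ u, u < c ∧ ∃ l ∈ (primeS a c u).2, e = s(vv g h (bb a c + c + u), vv g h l)) ∨
      (∃ l ∈ (litS a c).2, e = s(vv g h (bb a c + 2*c), vv g h l)) ∨
      (∃ l ∈ mixBack a c ∪ mixFwd a c, e = medge a c g h l) := by
  simp only [PrimeE, Finset.mem_union, Finset.mem_biUnion, Finset.mem_range,
    starEdgeSet_FF, Finset.mem_image, primeS, litS]
  constructor
  · rintro ((⟨u, hu, l, hl, he⟩ | ⟨l, hl, he⟩) | ⟨l, hl, he⟩)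
    · exact Or.inl ⟨u, hu, l, hl, he.symm⟩
    · exact Or.inr (Or.inl ⟨l, hl, he.symm⟩)
    · exact Or.inr (Or.inr ⟨l, hl, he.symm⟩)
  · rintro (⟨u, hu, l, hl, he⟩ | ⟨l, hl, he⟩ | ⟨l, hl, he⟩)
    · exact Or.inl (Or.inl ⟨u, hu, l, hl, he.symm⟩)
    · exact Or.inl (Or.inr ⟨l, hl, he.symm⟩)
    · exact Or.inr ⟨l, hl, he.symm⟩

lemma x_eq_vv {g : ℕ} (h : 0 < g) (x : Fin g) : x = vv g h x.val := by
  apply Fin.ext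
  rw [vv_val h x.isLt]

lemma FF_mem_iff {g : ℕ} (h : 0 < g) {st : ℕ × Finset ℕ} (hb : ∀ v ∈ st.2, v < g)
    {x : ℕ} (hx : x < g) : vv g h x ∈ (FF g h st).2 ↔ x ∈ st.2 := by
  simp only [FF, Finset.mem_image]
  constructor
  · rintro ⟨l, hl, he⟩
    rwa [vv_inj (hb l hl) hx |>.mp he] at hl
  · intro hx'
    exact ⟨x, hx', rfl⟩

lemma card_FF {g : ℕ} (h : 0 < g) {st : ℕ × Finset ℕ} (hb : ∀ v ∈ st.2, v < g) :
    (FF g h st).2.card = st.2.card := by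
  apply Finset.card_image_of_injOn
  intro x hx y hy hxy
  exact (vv_inj (hb x hx) (hb y hy)).mp hxy


/-! ## diff computations -/

lemma diff_medge_fwd {a c g : ℕ} (h : 0 < g) (hgg : g = gg a c) {l : ℕ}
    (hl1 : mu a c ≤ l) (hl2 : l < 2*mu a c) :
    pairDiff g (medge a c g h l) = 2*mu a c - l ∧ IsForwardEdge g (medge a c g h l) := by
  obtain ⟨e1,e2,e3,e4,e5,e6,e7⟩ := basics a c
  have hsw : medge a c g h l = s(vv g h l, vv g h (2*mu a c)) := Sym2.eq_swap
  rw [hsw]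
  obtain ⟨h1, h2⟩ := fwd_vv h hgg (show l < g by omega) (show 2*mu a c < g by omega)
    (by omega) (by omega)
  exact ⟨h2, h1⟩

lemma diff_medge_bwd {a c g : ℕ} (h : 0 < g) (hgg : g = gg a c) {l : ℕ}
    (hl2 : l < mu a c) :
    pairDiff g (medge a c g h l) = l + 1 ∧ IsBackwardEdge g (medge a c g h l) ∧
      ¬ IsForwardEdge g (medge a c g h l) := by
  obtain ⟨e1,e2,e3,e4,e5,e6,e7⟩ := basics a c
  have hsw : medge a c g h l = s(vv g h l, vv g h (2*mu a c)) := Sym2.eq_swap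
  rw [hsw]
  obtain ⟨h1, h2, h3⟩ := bwd_vv h hgg (show l < g by omega) (show 2*mu a c < g by omega)
    (by omega) (by omega)
  exact ⟨by rw [h3]; omega, h1, h2⟩

lemma diff_pure_edge {a c g : ℕ} (h : 0 < g) (hgg : g = gg a c) {s l : ℕ}
    (hs : s ≤ c) (hl : l ∈ (pureS a c s).2) :
    pairDiff g s(vv g h (c-s), vv g h l) = l - (c - s) ∧
    IsForwardEdge g s(vv g h (c-s), vv g h l) ∧
    s*(nn a c+1)+1 ≤ l - (c-s) ∧ l - (c-s) ≤ s*(nn a c+1) + nn a c := by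
  obtain ⟨e1,e2,e3,e4,e5,e6,e7⟩ := basics a c
  simp only [pureS, Finset.mem_Ico] at hl
  have hsb := mulle (m := nn a c) hs
  have hx : s*(nn a c+1) = s*nn a c + s := by ring
  obtain ⟨h1, h2⟩ := fwd_vv h hgg (show c - s < g by omega)
    (show l < g by omega) (by omega) (by omega)
  exact ⟨h2, h1, by omega, by omega⟩

lemma diff_prime_edge {a c g : ℕ} (h : 0 < g) (hgg : g = gg a c) {u l : ℕ}
    (hu : u < c) (hl : l ∈ (primeS a c u).2) :
    pairDiff g s(vv g h (bb a c+c+u), vv g h l) = l - (bb a c+c+u) ∧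
    IsForwardEdge g s(vv g h (bb a c+c+u), vv g h l) ∧
    u*nn a c + nn a c+1 ≤ l - (bb a c+c+u) + c ∧
    l - (bb a c+c+u) + c ≤ u*nn a c + 2*nn a c := by
  obtain ⟨e1,e2,e3,e4,e5,e6,e7⟩ := basics a c
  simp only [primeS, Finset.mem_Ico] at hl
  have hub := mullt (m := nn a c+1) hu
  have hx : u*(nn a c+1) = u*nn a c + u := by ring
  obtain ⟨h1, h2⟩ := fwd_vv h hgg (show bb a c+c+u < g by omega)
    (show l < g by omega) (by omega) (by omega)
  exact ⟨h2, h1, by omega, by omega⟩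

lemma diff_lit_edge {a c g : ℕ} (h : 0 < g) (hgg : g = gg a c) {l : ℕ}
    (hl : l ∈ (litS a c).2) :
    pairDiff g s(vv g h (bb a c+2*c), vv g h l) = l - (bb a c+2*c) ∧
    IsForwardEdge g s(vv g h (bb a c+2*c), vv g h l) ∧
    1 ≤ l - (bb a c+2*c) ∧ l - (bb a c+2*c) ≤ 2*a+2 := by
  obtain ⟨e1,e2,e3,e4,e5,e6,e7⟩ := basics a c
  simp only [litS, Finset.mem_Ico] at hl
  obtain ⟨h1, h2⟩ := fwd_vv h hgg (show bb a c+2*c < g by omega)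
    (show l < g by omega) (by omega) (by omega)
  exact ⟨h2, h1, by omega, by omega⟩

/-! ## pure surjectivity -/

lemma pure_surj {a c g : ℕ} (h : 0 < g) (hgg : g = gg a c) :
    ∀ d, 1 ≤ d → d ≤ mu a c →
      ∃ e ∈ PureE a c g h, pairDiff g e = d ∧ IsForwardEdge g e := by
  obtain ⟨e1,e2,e3,e4,e5,e6,e7⟩ := basics a c
  intro d hd1 hd2
  rcases Nat.lt_or_ge d (nn a c*(c+1)+c+1) with hlow | hhigh
  · by_cases hdvd : (nn a c+1) ∣ d
    · -- hole edge
      obtain ⟨m, hm⟩ := hdvd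
      have hcm : (nn a c+1)*m = m*(nn a c+1) := Nat.mul_comm _ _
      have hm1 : 1 ≤ m := by
        rcases Nat.eq_zero_or_pos m with h0 | h0
        · subst h0; simp at hcm hm; omega
        · omega
      have hmc : m ≤ c := by
        by_contra hgt
        have := mulle (m := nn a c+1) (show c+1 ≤ m by omega)
        have hy : (c+1)*(nn a c+1) = nn a c*(c+1)+c+1 := by ring
        omega
      set u := c - m with hu
      have huc : u < c := by omega
      have h9 : (u+m)*(nn a c+1) = u*(nn a c+1) + m*(nn a c+1) := by ring
      have h10 : u + m = c := by omega
      rw [h10] at h9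
      refine ⟨medge a c g h (bb a c + nn a c + u*(nn a c+1)), ?_, ?_⟩
      · rw [mem_PureE]
        refine Or.inr ⟨_, ?_, rfl⟩
        simp only [mixPure, Finset.mem_union, Finset.mem_image, Finset.mem_range]
        exact Or.inr ⟨u, huc, rfl⟩
      · have hub := mulle (m := nn a c+1) (show u ≤ c by omega)
        obtain ⟨hD, hF⟩ := diff_medge_fwd h hgg
          (show mu a c ≤ bb a c + nn a c + u*(nn a c+1) by omega)
          (show bb a c + nn a c + u*(nn a c+1) < 2*mu a c by omega)
        exact ⟨by omega, hF⟩
    · -- pure star edge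
      have hd := Nat.div_add_mod (d-1) (nn a c+1)
      have hmlt : (d-1) % (nn a c+1) < nn a c+1 := Nat.mod_lt _ (by omega)
      set s := (d-1)/(nn a c+1) with hsdef
      set r := (d-1) % (nn a c+1) with hrdef
      have hbr : (nn a c+1)*s = s*(nn a c+1) := Nat.mul_comm _ _
      have hx : s*(nn a c+1) = s*nn a c + s := by ring
      have hrn : r ≠ nn a c := by
        intro hr
        refine hdvd ⟨s+1, ?_⟩
        have hz : (nn a c+1)*(s+1) = s*(nn a c+1)+nn a c+1 := by ring
        omega
      have hsc : s ≤ c := by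
        by_contra hgt
        have := mullt (m := nn a c+1) (show c < s by omega)
        have hy : (c+1)*(nn a c+1) = nn a c*(c+1)+c+1 := by ring
        have hz : c*(nn a c+1)+(nn a c+1) = (c+1)*(nn a c+1) := by ring
        omega
      have hsb := mulle (m := nn a c) hsc
      refine ⟨s(vv g h (c-s), vv g h (c+1+s*nn a c+r)), ?_, ?_⟩
      · rw [mem_PureE]
        refine Or.inl ⟨s, hsc, c+1+s*nn a c+r, ?_, rfl⟩
        simp only [pureS, Finset.mem_Ico]
        omega
      · obtain ⟨hD, hF, _, _⟩ := diff_pure_edge h hgg hsc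
          (show c+1+s*nn a c+r ∈ (pureS a c s).2 by simp only [pureS, Finset.mem_Ico]; omega)
        exact ⟨by omega, hF⟩
  · -- mix big pure edge
    refine ⟨medge a c g h (2*mu a c - d), ?_, ?_⟩
    · rw [mem_PureE]
      refine Or.inr ⟨_, ?_, rfl⟩
      simp only [mixPure, Finset.mem_union, Finset.mem_Ico, Finset.mem_image, Finset.mem_range]
      exact Or.inl ⟨by omega, by omega⟩
    · obtain ⟨hD, hF⟩ := diff_medge_fwd h hgg (show mu a c ≤ 2*mu a c - d by omega)
        (show 2*mu a c - d < 2*mu a c by omega)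
      exact ⟨by omega, hF⟩


/-! ## pure injectivity -/

lemma pure_inj {a c g : ℕ} (h : 0 < g) (hgg : g = gg a c) :
    ∀ e₁ ∈ PureE a c g h, ∀ e₂ ∈ PureE a c g h,
      pairDiff g e₁ = pairDiff g e₂ → e₁ = e₂ := by
  obtain ⟨e1,e2,e3,e4,e5,e6,e7⟩ := basics a c
  -- helper: diff of a hole edge
  have hole_diff : ∀ u, u < c →
      pairDiff g (medge a c g h (bb a c + nn a c + u*(nn a c+1))) = c*(nn a c+1) - u*(nn a c+1)
      := by
    intro u hu
    have hub := mullt (m := nn a c+1) hu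
    obtain ⟨hD, _⟩ := diff_medge_fwd h hgg
      (show mu a c ≤ bb a c + nn a c + u*(nn a c+1) by omega)
      (show bb a c + nn a c + u*(nn a c+1) < 2*mu a c by omega)
    omega
  intro e₁ he₁ e₂ he₂ hdd
  rw [mem_PureE] at he₁ he₂
  rcases he₁ with ⟨s₁, hs₁, l₁, hl₁, rfl⟩ | ⟨l₁, hl₁, rfl⟩
  · obtain ⟨hD1, _, hb1, hb1'⟩ := diff_pure_edge h hgg hs₁ hl₁
    rcases he₂ with ⟨s₂, hs₂, l₂, hl₂, rfl⟩ | ⟨l₂, hl₂, rfl⟩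
    · obtain ⟨hD2, _, hb2, hb2'⟩ := diff_pure_edge h hgg hs₂ hl₂
      have hss : s₁ = s₂ := by
        rcases lt_trichotomy s₁ s₂ with hx | hx | hx
        · have := mullt (m := nn a c+1) hx; omega
        · exact hx
        · have := mullt (m := nn a c+1) hx; omega
      subst hss
      simp only [pureS, Finset.mem_Ico] at hl₁ hl₂
      have : l₁ = l₂ := by omega
      rw [this]
    · simp only [mixPure, Finset.mem_union, Finset.mem_Ico, Finset.mem_image,
        Finset.mem_range] at hl₂
      have hsb := mulle (m := nn a c+1) hs₁
      rcases hl₂ with hl₂ | ⟨u, hu, rfl⟩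
      · obtain ⟨hD2, _⟩ := diff_medge_fwd h hgg (show mu a c ≤ l₂ by omega)
          (show l₂ < 2*mu a c by omega)
        omega
      · have hD2 := hole_diff u hu
        set j := c - u with hj
        have h9 : (j+u)*(nn a c+1) = j*(nn a c+1)+u*(nn a c+1) := by ring
        have h10 : j + u = c := by omega
        rw [h10] at h9
        have hub := mulle (m := nn a c+1) (show u ≤ c by omega)
        rcases lt_trichotomy s₁ j with hx | hx | hx
        · have := mullt (m := nn a c+1) hx; omega
        · have : s₁*(nn a c+1) = j*(nn a c+1) := by rw [hx]
          omega
        · have := mullt (m := nn a c+1) hx; omega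
  · simp only [mixPure, Finset.mem_union, Finset.mem_Ico, Finset.mem_image,
      Finset.mem_range] at hl₁
    rcases he₂ with ⟨s₂, hs₂, l₂, hl₂, rfl⟩ | ⟨l₂, hl₂, rfl⟩
    · -- symmetric to A-B above: contradiction
      obtain ⟨hD2, _, hb2, hb2'⟩ := diff_pure_edge h hgg hs₂ hl₂
      have hsb := mulle (m := nn a c+1) hs₂
      rcases hl₁ with hl₁ | ⟨u, hu, rfl⟩
      · obtain ⟨hD1, _⟩ := diff_medge_fwd h hgg (show mu a c ≤ l₁ by omega)
          (show l₁ < 2*mu a c by omega)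
        omega
      · have hD1 := hole_diff u hu
        set j := c - u with hj
        have h9 : (j+u)*(nn a c+1) = j*(nn a c+1)+u*(nn a c+1) := by ring
        have h10 : j + u = c := by omega
        rw [h10] at h9
        have hub := mulle (m := nn a c+1) (show u ≤ c by omega)
        rcases lt_trichotomy s₂ j with hx | hx | hx
        · have := mullt (m := nn a c+1) hx; omega
        · have : s₂*(nn a c+1) = j*(nn a c+1) := by rw [hx]
          omega
        · have := mullt (m := nn a c+1) hx; omega
    · simp only [mixPure, Finset.mem_union, Finset.mem_Ico, Finset.mem_image,
        Finset.mem_range] at hl₂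
      rcases hl₁ with hl₁ | ⟨u₁, hu₁, rfl⟩ <;> rcases hl₂ with hl₂ | ⟨u₂, hu₂, rfl⟩
      · obtain ⟨hD1, _⟩ := diff_medge_fwd h hgg (show mu a c ≤ l₁ by omega)
          (show l₁ < 2*mu a c by omega)
        obtain ⟨hD2, _⟩ := diff_medge_fwd h hgg (show mu a c ≤ l₂ by omega)
          (show l₂ < 2*mu a c by omega)
        have : l₁ = l₂ := by omega
        rw [this]
      · have hD2 := hole_diff u₂ hu₂
        obtain ⟨hD1, _⟩ := diff_medge_fwd h hgg (show mu a c ≤ l₁ by omega)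
          (show l₁ < 2*mu a c by omega)
        have hub := mulle (m := nn a c+1) (show u₂ ≤ c by omega)
        omega
      · have hD1 := hole_diff u₁ hu₁
        obtain ⟨hD2, _⟩ := diff_medge_fwd h hgg (show mu a c ≤ l₂ by omega)
          (show l₂ < 2*mu a c by omega)
        have hub := mulle (m := nn a c+1) (show u₁ ≤ c by omega)
        omega
      · have hD1 := hole_diff u₁ hu₁
        have hD2 := hole_diff u₂ hu₂
        have hb1 := mulle (m := nn a c+1) (show u₁ ≤ c by omega)
        have hb2 := mulle (m := nn a c+1) (show u₂ ≤ c by omega)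
        have huu : u₁ = u₂ := by
          rcases lt_trichotomy u₁ u₂ with hx | hx | hx
          · have := mullt (m := nn a c+1) hx; omega
          · exact hx
          · have := mullt (m := nn a c+1) hx; omega
        rw [huu]

/-! ## prime injectivity -/

lemma prime_inj {a c g : ℕ} (h : 0 < g) (hgg : g = gg a c) :
    ∀ e₁ ∈ PrimeE a c g h, ∀ e₂ ∈ PrimeE a c g h,
      pairDiff g e₁ = pairDiff g e₂ → e₁ = e₂ := by
  obtain ⟨e1,e2,e3,e4,e5,e6,e7⟩ := basics a c
  -- normalized data: diff ranges per family
  intro e₁ he₁ e₂ he₂ hdd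
  rw [mem_PrimeE] at he₁ he₂
  -- we extract for each edge: a tag and bounds
  rcases he₁ with ⟨u₁, hu₁, l₁, hl₁, rfl⟩ | ⟨l₁, hl₁, rfl⟩ | ⟨l₁, hl₁, rfl⟩
  · obtain ⟨hD1, _, hb1, hb1'⟩ := diff_prime_edge h hgg hu₁ hl₁
    have hm1 := mullt (m := nn a c) hu₁
    rcases he₂ with ⟨u₂, hu₂, l₂, hl₂, rfl⟩ | ⟨l₂, hl₂, rfl⟩ | ⟨l₂, hl₂, rfl⟩
    · obtain ⟨hD2, _, hb2, hb2'⟩ := diff_prime_edge h hgg hu₂ hl₂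
      have huu : u₁ = u₂ := by
        rcases lt_trichotomy u₁ u₂ with hx | hx | hx
        · have := mullt (m := nn a c) hx; omega
        · exact hx
        · have := mullt (m := nn a c) hx; omega
      subst huu
      simp only [primeS, Finset.mem_Ico] at hl₁ hl₂
      have : l₁ = l₂ := by omega
      rw [this]
    · obtain ⟨hD2, _, hb2, hb2'⟩ := diff_lit_edge h hgg hl₂
      omega
    · simp only [Finset.mem_union, mixBack, mixFwd, Finset.mem_Ico] at hl₂
      rcases hl₂ with hl₂ | hl₂
      · obtain ⟨hD2, _, _⟩ := diff_medge_bwd h hgg (show l₂ < mu a c by omega)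
        omega
      · obtain ⟨hD2, _⟩ := diff_medge_fwd h hgg (show mu a c ≤ l₂ by omega)
          (show l₂ < 2*mu a c by omega)
        omega
  · obtain ⟨hD1, _, hb1, hb1'⟩ := diff_lit_edge h hgg hl₁
    rcases he₂ with ⟨u₂, hu₂, l₂, hl₂, rfl⟩ | ⟨l₂, hl₂, rfl⟩ | ⟨l₂, hl₂, rfl⟩
    · obtain ⟨hD2, _, hb2, hb2'⟩ := diff_prime_edge h hgg hu₂ hl₂
      have hm2 := mullt (m := nn a c) hu₂
      omega
    · obtain ⟨hD2, _, hb2, hb2'⟩ := diff_lit_edge h hgg hl₂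
      simp only [litS, Finset.mem_Ico] at hl₁ hl₂
      have : l₁ = l₂ := by omega
      rw [this]
    · simp only [Finset.mem_union, mixBack, mixFwd, Finset.mem_Ico] at hl₂
      rcases hl₂ with hl₂ | hl₂
      · obtain ⟨hD2, _, _⟩ := diff_medge_bwd h hgg (show l₂ < mu a c by omega)
        omega
      · obtain ⟨hD2, _⟩ := diff_medge_fwd h hgg (show mu a c ≤ l₂ by omega)
          (show l₂ < 2*mu a c by omega)
        omega
  · simp only [Finset.mem_union, mixBack, mixFwd, Finset.mem_Ico] at hl₁
    rcases he₂ with ⟨u₂, hu₂, l₂, hl₂, rfl⟩ | ⟨l₂, hl₂, rfl⟩ | ⟨l₂, hl₂, rfl⟩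
    · obtain ⟨hD2, _, hb2, hb2'⟩ := diff_prime_edge h hgg hu₂ hl₂
      have hm2 := mullt (m := nn a c) hu₂
      rcases hl₁ with hl₁ | hl₁
      · obtain ⟨hD1, _, _⟩ := diff_medge_bwd h hgg (show l₁ < mu a c by omega)
        omega
      · obtain ⟨hD1, _⟩ := diff_medge_fwd h hgg (show mu a c ≤ l₁ by omega)
          (show l₁ < 2*mu a c by omega)
        omega
    · obtain ⟨hD2, _, hb2, hb2'⟩ := diff_lit_edge h hgg hl₂
      rcases hl₁ with hl₁ | hl₁
      · obtain ⟨hD1, _, _⟩ := diff_medge_bwd h hgg (show l₁ < mu a c by omega)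
        omega
      · obtain ⟨hD1, _⟩ := diff_medge_fwd h hgg (show mu a c ≤ l₁ by omega)
          (show l₁ < 2*mu a c by omega)
        omega
    · simp only [Finset.mem_union, mixBack, mixFwd, Finset.mem_Ico] at hl₂
      have hll : l₁ = l₂ := by
        rcases hl₁ with hl₁ | hl₁ <;> rcases hl₂ with hl₂ | hl₂
        · obtain ⟨hD1, _, _⟩ := diff_medge_bwd h hgg (show l₁ < mu a c by omega)
          obtain ⟨hD2, _, _⟩ := diff_medge_bwd h hgg (show l₂ < mu a c by omega)
          omega
        · obtain ⟨hD1, _, _⟩ := diff_medge_bwd h hgg (show l₁ < mu a c by omega)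
          obtain ⟨hD2, _⟩ := diff_medge_fwd h hgg (show mu a c ≤ l₂ by omega)
            (show l₂ < 2*mu a c by omega)
          omega
        · obtain ⟨hD1, _⟩ := diff_medge_fwd h hgg (show mu a c ≤ l₁ by omega)
            (show l₁ < 2*mu a c by omega)
          obtain ⟨hD2, _, _⟩ := diff_medge_bwd h hgg (show l₂ < mu a c by omega)
          omega
        · obtain ⟨hD1, _⟩ := diff_medge_fwd h hgg (show mu a c ≤ l₁ by omega)
            (show l₁ < 2*mu a c by omega)
          obtain ⟨hD2, _⟩ := diff_medge_fwd h hgg (show mu a c ≤ l₂ by omega)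
            (show l₂ < 2*mu a c by omega)
          omega
      rw [hll]


/-! ## edge set decomposition -/

lemma E_eq (a c g : ℕ) (h : 0 < g) :
    factorEdges g (PP a c g h) = PureE a c g h ∪ PrimeE a c g h := by
  ext e
  rw [factorEdges, Finset.mem_biUnion, Finset.mem_union]
  constructor
  · rintro ⟨p, hp, he⟩
    rw [mem_PP] at hp
    rcases hp with ⟨s, hs, rfl⟩ | ⟨u, hu, rfl⟩ | rfl | rfl
    · left
      rw [PureE, Finset.mem_union]
      exact Or.inl (Finset.mem_biUnion.mpr ⟨s, Finset.mem_range.mpr (by omega), he⟩)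
    · right
      rw [PrimeE, Finset.mem_union]
      exact Or.inl (Finset.mem_union.mpr
        (Or.inl (Finset.mem_biUnion.mpr ⟨u, Finset.mem_range.mpr hu, he⟩)))
    · right
      rw [PrimeE, Finset.mem_union]
      exact Or.inl (Finset.mem_union.mpr (Or.inr he))
    · rw [starEdgeSet_FF] at he
      rw [Finset.mem_image] at he
      obtain ⟨l, hl, rfl⟩ := he
      have hl' : l ∈ (mixBack a c ∪ mixFwd a c) ∪ mixPure a c := hl
      rw [Finset.mem_union] at hl'
      rcases hl' with hl' | hl'
      · right
        rw [PrimeE, Finset.mem_union]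
        exact Or.inr (Finset.mem_image.mpr ⟨l, hl', rfl⟩)
      · left
        rw [PureE, Finset.mem_union]
        exact Or.inr (Finset.mem_image.mpr ⟨l, hl', rfl⟩)
  · rintro (he | he)
    · rw [mem_PureE] at he
      rcases he with ⟨s, hs, l, hl, rfl⟩ | ⟨l, hl, rfl⟩
      · refine ⟨FF g h (pureS a c s), mem_PP.mpr (Or.inl ⟨s, hs, rfl⟩), ?_⟩
        rw [starEdgeSet_FF, Finset.mem_image]
        exact ⟨l, hl, rfl⟩
      · refine ⟨FF g h (mixS a c), mem_PP.mpr (Or.inr (Or.inr (Or.inr rfl))), ?_⟩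
        rw [starEdgeSet_FF, Finset.mem_image]
        refine ⟨l, ?_, rfl⟩
        exact Finset.mem_union.mpr (Or.inr hl)
    · rw [mem_PrimeE] at he
      rcases he with ⟨u, hu, l, hl, rfl⟩ | ⟨l, hl, rfl⟩ | ⟨l, hl, rfl⟩
      · refine ⟨FF g h (primeS a c u), mem_PP.mpr (Or.inr (Or.inl ⟨u, hu, rfl⟩)), ?_⟩
        rw [starEdgeSet_FF, Finset.mem_image]
        exact ⟨l, hl, rfl⟩
      · refine ⟨FF g h (litS a c), mem_PP.mpr (Or.inr (Or.inr (Or.inl rfl))), ?_⟩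
        rw [starEdgeSet_FF, Finset.mem_image]
        exact ⟨l, hl, rfl⟩
      · refine ⟨FF g h (mixS a c), mem_PP.mpr (Or.inr (Or.inr (Or.inr rfl))), ?_⟩
        rw [starEdgeSet_FF, Finset.mem_image]
        exact ⟨l, Finset.mem_union.mpr (Or.inl hl), rfl⟩

/-! ## bounds for memberships (ℕ data) -/

lemma pure_lvs_range {a c s l : ℕ} (hs : s ≤ c) (hl : l ∈ (pureS a c s).2) :
    c+1 ≤ l ∧ l ≤ nn a c*(c+1)+c := by
  obtain ⟨e1,e2,e3,e4,e5,e6,e7⟩ := basics a c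
  simp only [pureS, Finset.mem_Ico] at hl
  have := mulle (m := nn a c) hs
  omega

lemma prime_lvs_range {a c u l : ℕ} (hu : u < c) (hl : l ∈ (primeS a c u).2) :
    bb a c + nn a c + 1 ≤ l ∧ l < 2*mu a c := by
  obtain ⟨e1,e2,e3,e4,e5,e6,e7⟩ := basics a c
  simp only [primeS, Finset.mem_Ico] at hl
  have := mullt (m := nn a c+1) hu
  omega

lemma mixPure_range {a c l : ℕ} (hl : l ∈ mixPure a c) :
    mu a c ≤ l ∧ l < 2*mu a c ∧ (l < bb a c ∨ bb a c + nn a c ≤ l) := by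
  obtain ⟨e1,e2,e3,e4,e5,e6,e7⟩ := basics a c
  simp only [mixPure, Finset.mem_union, Finset.mem_Ico, Finset.mem_image,
    Finset.mem_range] at hl
  rcases hl with hl | ⟨u, hu, rfl⟩
  · omega
  · have := mullt (m := nn a c+1) hu
    omega

/-! ## disjointness of pure and prime edges -/

lemma disj_pure_prime {a c g : ℕ} (h : 0 < g) (hgg : g = gg a c) :
    Disjoint (PureE a c g h) (PrimeE a c g h) := by
  obtain ⟨e1,e2,e3,e4,e5,e6,e7⟩ := basics a c
  rw [Finset.disjoint_left]
  intro e he he'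
  rw [mem_PureE] at he
  rw [mem_PrimeE] at he'
  rcases he with ⟨s, hs, l, hl, rfl⟩ | ⟨l, hl, rfl⟩
  · obtain ⟨hr1, hr2⟩ := pure_lvs_range hs hl
    rcases he' with ⟨u, hu, l₂, hl₂, he2⟩ | ⟨l₂, hl₂, he2⟩ | ⟨l₂, hl₂, he2⟩
    · obtain ⟨hq1, hq2⟩ := prime_lvs_range hu hl₂
      rw [edge_eq_iff h (by omega) (by omega) (by omega) (by omega)] at he2
      omega
    · simp only [litS, Finset.mem_Ico] at hl₂
      rw [edge_eq_iff h (by omega) (by omega) (by omega) (by omega)] at he2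
      omega
    · simp only [Finset.mem_union, mixBack, mixFwd, Finset.mem_Ico] at hl₂
      rw [medge, edge_eq_iff h (by omega) (by omega) (by omega) (by omega)] at he2
      omega
  · obtain ⟨hr1, hr2, hr3⟩ := mixPure_range hl
    rcases he' with ⟨u, hu, l₂, hl₂, he2⟩ | ⟨l₂, hl₂, he2⟩ | ⟨l₂, hl₂, he2⟩
    · obtain ⟨hq1, hq2⟩ := prime_lvs_range hu hl₂
      rw [medge, edge_eq_iff h (by omega) (by omega) (by omega) (by omega)] at he2
      omega
    · simp only [litS, Finset.mem_Ico] at hl₂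
      rw [medge, edge_eq_iff h (by omega) (by omega) (by omega) (by omega)] at he2
      omega
    · simp only [Finset.mem_union, mixBack, mixFwd, Finset.mem_Ico] at hl₂
      rw [medge, medge, edge_eq_iff h (by omega) (by omega) (by omega) (by omega)] at he2
      omega


/-! ## vertex partition at Fin level -/

lemma shape_bound {a c : ℕ} {st : ℕ × Finset ℕ}
    (hst : (∃ s, s ≤ c ∧ st = pureS a c s) ∨ (∃ u, u < c ∧ st = primeS a c u) ∨
      st = litS a c ∨ st = mixS a c) :
    ∀ v, (v = st.1 ∨ v ∈ st.2) → v < gg a c := by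
  intro v hv
  rcases hst with ⟨s, hs, rfl⟩ | ⟨u, hu, rfl⟩ | rfl | rfl
  · exact pure_bound a c s v hs hv
  · exact prime_bound a c u v hu hv
  · exact lit_bound a c v hv
  · exact mix_bound a c v hv

lemma FF_vertex_iff {a c g : ℕ} (h : 0 < g) (hgg : g = gg a c) {st : ℕ × Finset ℕ}
    (hst : (∃ s, s ≤ c ∧ st = pureS a c s) ∨ (∃ u, u < c ∧ st = primeS a c u) ∨
      st = litS a c ∨ st = mixS a c) (x : Fin g) :
    (x = (FF g h st).1 ∨ x ∈ (FF g h st).2) ↔ (x.val = st.1 ∨ x.val ∈ st.2) := by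
  have hb := shape_bound hst
  have hc : st.1 < g := by rw [hgg]; exact hb _ (Or.inl rfl)
  have hb2 : ∀ v ∈ st.2, v < g := fun v hv => by rw [hgg]; exact hb v (Or.inr hv)
  constructor
  · rintro (hx | hx)
    · left
      have : (FF g h st).1 = vv g h st.1 := rfl
      rw [this] at hx
      rw [hx, vv_val h hc]
    · right
      rw [x_eq_vv h x] at hx
      exact (FF_mem_iff h hb2 x.isLt).mp hx
  · rintro (hx | hx)
    · left
      apply Fin.ext
      rw [show (FF g h st).1 = vv g h st.1 from rfl, vv_val h hc, hx]
    · right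
      rw [x_eq_vv h x]
      exact (FF_mem_iff h hb2 x.isLt).mpr hx

lemma own_eq_of_mem {a c v : ℕ} {st : ℕ × Finset ℕ}
    (hst : (∃ s, s ≤ c ∧ st = pureS a c s) ∨ (∃ u, u < c ∧ st = primeS a c u) ∨
      st = litS a c ∨ st = mixS a c)
    (hv : v = st.1 ∨ v ∈ st.2) : own a c v = st := by
  rcases hst with ⟨s, hs, rfl⟩ | ⟨u, hu, rfl⟩ | rfl | rfl
  · exact own_pure a c s v hs hv
  · exact own_prime a c u v hu hv
  · exact own_lit a c v hv
  · exact own_mix a c v hv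

lemma exists_unique_star {a c g : ℕ} (h : 0 < g) (hgg : g = gg a c) (x : Fin g) :
    ∃! p, p ∈ PP a c g h ∧ (x = p.1 ∨ x ∈ p.2) := by
  have hvg : (x : ℕ) < gg a c := by rw [← hgg]; exact x.isLt
  have hshape := own_shape a c x.val hvg
  have hshape' : (∃ s, s ≤ c ∧ own a c x.val = pureS a c s) ∨
      (∃ u, u < c ∧ own a c x.val = primeS a c u) ∨
      own a c x.val = litS a c ∨ own a c x.val = mixS a c := hshape
  refine ⟨FF g h (own a c x.val), ⟨?_, ?_⟩, ?_⟩
  · rw [mem_PP]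
    rcases hshape' with ⟨s, hs, he⟩ | ⟨u, hu, he⟩ | he | he
    · exact Or.inl ⟨s, hs, by rw [he]⟩
    · exact Or.inr (Or.inl ⟨u, hu, by rw [he]⟩)
    · exact Or.inr (Or.inr (Or.inl (by rw [he])))
    · exact Or.inr (Or.inr (Or.inr (by rw [he])))
  · exact (FF_vertex_iff h hgg hshape' x).mpr (own_contains a c x.val hvg)
  · rintro p ⟨hp, hx⟩
    rw [mem_PP] at hp
    have hp' : (∃ s, s ≤ c ∧ p = FF g h (pureS a c s)) ∨
        (∃ u, u < c ∧ p = FF g h (primeS a c u)) ∨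
        p = FF g h (litS a c) ∨ p = FF g h (mixS a c) := by
      rcases hp with ⟨s, hs, he⟩ | ⟨u, hu, he⟩ | he | he
      · exact Or.inl ⟨s, hs, he.symm⟩
      · exact Or.inr (Or.inl ⟨u, hu, he.symm⟩)
      · exact Or.inr (Or.inr (Or.inl he))
      · exact Or.inr (Or.inr (Or.inr he))
    rcases hp' with ⟨s, hs, rfl⟩ | ⟨u, hu, rfl⟩ | rfl | rfl
    · have hm := (FF_vertex_iff h hgg (Or.inl ⟨s, hs, rfl⟩) x).mp hx
      rw [own_eq_of_mem (Or.inl ⟨s, hs, rfl⟩) hm]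
    · have hm := (FF_vertex_iff h hgg (Or.inr (Or.inl ⟨u, hu, rfl⟩)) x).mp hx
      rw [own_eq_of_mem (Or.inr (Or.inl ⟨u, hu, rfl⟩)) hm]
    · have hm := (FF_vertex_iff h hgg (Or.inr (Or.inr (Or.inl rfl))) x).mp hx
      rw [own_eq_of_mem (a := a) (c := c) (Or.inr (Or.inr (Or.inl rfl))) hm]
    · have hm := (FF_vertex_iff h hgg (Or.inr (Or.inr (Or.inr rfl))) x).mp hx
      rw [own_eq_of_mem (a := a) (c := c) (Or.inr (Or.inr (Or.inr rfl))) hm]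

lemma almost_factor {a c g : ℕ} (h : 0 < g) (hgg : g = gg a c) :
    IsAlmostStarFactor (nn a c) g (2*a+3) (PP a c g h) := by
  obtain ⟨e1,e2,e3,e4,e5,e6,e7⟩ := basics a c
  refine ⟨?_, fun x => exists_unique_star h hgg x, ?_⟩
  · intro p hp
    rw [mem_PP] at hp
    rcases hp with ⟨s, hs, he⟩ | ⟨u, hu, he⟩ | he | he
    · rw [← he]
      intro hc
      have hb2 : ∀ v ∈ (pureS a c s).2, v < g :=
        fun v hv => by rw [hgg]; exact pure_bound a c s v hs (Or.inr hv)
      have hc1 : (pureS a c s).1 < g := by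
        rw [hgg]; exact pure_bound a c s _ hs (Or.inl rfl)
      exact pure_notMem a c s hs ((FF_mem_iff h hb2 hc1).mp hc)
    · rw [← he]
      intro hc
      have hb2 : ∀ v ∈ (primeS a c u).2, v < g :=
        fun v hv => by rw [hgg]; exact prime_bound a c u v hu (Or.inr hv)
      have hc1 : (primeS a c u).1 < g := by
        rw [hgg]; exact prime_bound a c u _ hu (Or.inl rfl)
      exact prime_notMem a c u hu ((FF_mem_iff h hb2 hc1).mp hc)
    · rw [he]
      intro hc
      have hb2 : ∀ v ∈ (litS a c).2, v < g :=
        fun v hv => by rw [hgg]; exact lit_bound a c v (Or.inr hv)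
      have hc1 : (litS a c).1 < g := by
        rw [hgg]; exact lit_bound a c _ (Or.inl rfl)
      exact lit_notMem a c ((FF_mem_iff h hb2 hc1).mp hc)
    · rw [he]
      intro hc
      have hb2 : ∀ v ∈ (mixS a c).2, v < g :=
        fun v hv => by rw [hgg]; exact mix_bound a c v (Or.inr hv)
      have hc1 : (mixS a c).1 < g := by
        rw [hgg]; exact mix_bound a c _ (Or.inl rfl)
      exact mix_notMem a c ((FF_mem_iff h hb2 hc1).mp hc)
  · rw [if_neg (by omega : ¬ (2*a+3 = 0))]
    refine ⟨FF g h (litS a c), mem_PP.mpr (Or.inr (Or.inr (Or.inl rfl))), ?_, ?_⟩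
    · rw [card_FF h (fun v hv => by rw [hgg]; exact lit_bound a c v (Or.inr hv)),
        card_lit_lvs]
      omega
    · intro p hp hne
      rw [mem_PP] at hp
      rcases hp with ⟨s, hs, he⟩ | ⟨u, hu, he⟩ | he | he
      · rw [← he,
          card_FF h (fun v hv => by rw [hgg]; exact pure_bound a c s v hs (Or.inr hv)),
          card_pure_lvs]
      · rw [← he,
          card_FF h (fun v hv => by rw [hgg]; exact prime_bound a c u v hu (Or.inr hv)),
          card_prime_lvs]
      · exact absurd he hne
      · rw [he,
          card_FF h (fun v hv => by rw [hgg]; exact mix_bound a c v (Or.inr hv)),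
          card_mix_lvs]


/-! ## admissibility -/

lemma diff_range_of_mem {a c g : ℕ} (h : 0 < g) (hgg : g = gg a c) :
    ∀ e ∈ factorEdges g (PP a c g h), 1 ≤ pairDiff g e ∧ pairDiff g e ≤ mu a c := by
  obtain ⟨e1,e2,e3,e4,e5,e6,e7⟩ := basics a c
  intro e he
  rw [E_eq, Finset.mem_union] at he
  rcases he with he | he
  · rw [mem_PureE] at he
    rcases he with ⟨s, hs, l, hl, rfl⟩ | ⟨l, hl, rfl⟩
    · obtain ⟨hr1, hr2⟩ := pure_lvs_range hs hl
      exact diff_bounds h hgg (by omega) (by omega) (by omega)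
    · obtain ⟨hr1, hr2, _⟩ := mixPure_range hl
      exact diff_bounds h hgg (by omega) (by omega) (by omega)
  · rw [mem_PrimeE] at he
    rcases he with ⟨u, hu, l, hl, rfl⟩ | ⟨l, hl, rfl⟩ | ⟨l, hl, rfl⟩
    · obtain ⟨hr1, hr2⟩ := prime_lvs_range hu hl
      exact diff_bounds h hgg (by omega) (by omega) (by omega)
    · simp only [litS, Finset.mem_Ico] at hl
      exact diff_bounds h hgg (by omega) (by omega) (by omega)
    · simp only [Finset.mem_union, mixBack, mixFwd, Finset.mem_Ico] at hl
      rcases hl with hl | hl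
      · exact diff_bounds h hgg (by omega) (by omega) (by omega)
      · exact diff_bounds h hgg (by omega) (by omega) (by omega)

lemma pure_filter_card {a c g : ℕ} (h : 0 < g) (hgg : g = gg a c) :
    ∀ d, ((PureE a c g h).filter (fun e => pairDiff g e = d)).card ≤ 1 := by
  intro d
  rw [Finset.card_le_one]
  intro x hx y hy
  simp only [Finset.mem_filter] at hx hy
  exact pure_inj h hgg x hx.1 y hy.1 (by rw [hx.2, hy.2])

lemma prime_filter_card {a c g : ℕ} (h : 0 < g) (hgg : g = gg a c) :
    ∀ d, ((PrimeE a c g h).filter (fun e => pairDiff g e = d)).card ≤ 1 := by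
  intro d
  rw [Finset.card_le_one]
  intro x hx y hy
  simp only [Finset.mem_filter] at hx hy
  exact prime_inj h hgg x hx.1 y hy.1 (by rw [hx.2, hy.2])

lemma admissible {a c g : ℕ} (h : 0 < g) (hgg : g = gg a c) :
    IsAdmissibleLabeling g (factorEdges g (PP a c g h)) (PureE a c g h) := by
  refine ⟨by rw [E_eq]; exact Finset.subset_union_left, ?_⟩
  rintro d ⟨e, he, hde⟩
  have hdr := diff_range_of_mem h hgg e he
  rw [hde] at hdr
  constructor
  · obtain ⟨e0, he0, hd0, _⟩ := pure_surj h hgg d (by omega) (by omega)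
    rw [Finset.card_eq_one]
    refine ⟨e0, ?_⟩
    ext x
    simp only [Finset.mem_filter, Finset.mem_singleton]
    constructor
    · rintro ⟨hx, hdx⟩
      exact pure_inj h hgg x hx e0 he0 (by rw [hdx, hd0])
    · rintro rfl
      exact ⟨he0, hd0⟩
  · refine le_trans (Finset.card_le_card ?_) (prime_filter_card h hgg d)
    intro x hx
    simp only [Finset.mem_filter, Finset.mem_sdiff] at hx ⊢
    refine ⟨?_, hx.2⟩
    have := hx.1.1
    rw [E_eq, Finset.mem_union] at this
    rcases this with hh | hh
    · exact absurd hh hx.1.2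
    · exact hh

lemma two_bound {a c g : ℕ} (h : 0 < g) (hgg : g = gg a c) :
    ∀ d, ((factorEdges g (PP a c g h)).filter (fun e => pairDiff g e = d)).card ≤ 2 := by
  intro d
  rw [E_eq, Finset.filter_union]
  refine le_trans (Finset.card_union_le _ _) ?_
  have h1 := pure_filter_card h hgg d
  have h2 := prime_filter_card h hgg d
  omega

/-! ## the mixed star -/

lemma star_mix (a c g : ℕ) (h : 0 < g) :
    starEdgeSet (FF g h (mixS a c)) = (mixLvs a c).image (medge a c g h) := by
  rw [starEdgeSet_FF]
  rfl

lemma medge_injOn {a c g : ℕ} (h : 0 < g) (hgg : g = gg a c) {S : Finset ℕ}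
    (hb : ∀ l ∈ S, l < 2*mu a c) : Set.InjOn (medge a c g h) S := by
  obtain ⟨e1,e2,e3,e4,e5,e6,e7⟩ := basics a c
  intro x hx y hy hxy
  have hxb := hb x (Finset.mem_coe.mp hx)
  have hyb := hb y (Finset.mem_coe.mp hy)
  rw [medge, medge, edge_eq_iff h (by omega) (by omega) (by omega) (by omega)] at hxy
  omega

lemma mix_inter {a c g : ℕ} (h : 0 < g) (hgg : g = gg a c) :
    starEdgeSet (FF g h (mixS a c)) ∩ PureE a c g h = (mixPure a c).image (medge a c g h) := by
  apply Finset.Subset.antisymm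
  · intro e he
    rw [Finset.mem_inter, star_mix, Finset.mem_image] at he
    obtain ⟨⟨l, hl, rfl⟩, hp⟩ := he
    have hl' : l ∈ (mixBack a c ∪ mixFwd a c) ∪ mixPure a c := hl
    rw [Finset.mem_union] at hl'
    rcases hl' with hl' | hl'
    · exfalso
      have hpr : medge a c g h l ∈ PrimeE a c g h :=
        mem_PrimeE.mpr (Or.inr (Or.inr ⟨l, hl', rfl⟩))
      exact (Finset.disjoint_left.mp (disj_pure_prime h hgg)) hp hpr
    · exact Finset.mem_image.mpr ⟨l, hl', rfl⟩
  · intro e he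
    rw [Finset.mem_image] at he
    obtain ⟨l, hl, rfl⟩ := he
    rw [Finset.mem_inter, star_mix, Finset.mem_image]
    exact ⟨⟨l, Finset.mem_union.mpr (Or.inr hl), rfl⟩, mem_PureE.mpr (Or.inr ⟨l, hl, rfl⟩)⟩

lemma mix_sdiff {a c g : ℕ} (h : 0 < g) (hgg : g = gg a c) :
    starEdgeSet (FF g h (mixS a c)) \ PureE a c g h
      = (mixBack a c ∪ mixFwd a c).image (medge a c g h) := by
  apply Finset.Subset.antisymm
  · intro e he
    rw [Finset.mem_sdiff, star_mix, Finset.mem_image] at he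
    obtain ⟨⟨l, hl, rfl⟩, hp⟩ := he
    have hl' : l ∈ (mixBack a c ∪ mixFwd a c) ∪ mixPure a c := hl
    rw [Finset.mem_union] at hl'
    rcases hl' with hl' | hl'
    · exact Finset.mem_image.mpr ⟨l, hl', rfl⟩
    · exact absurd (mem_PureE.mpr (Or.inr ⟨l, hl', rfl⟩)) hp
  · intro e he
    rw [Finset.mem_image] at he
    obtain ⟨l, hl, rfl⟩ := he
    rw [Finset.mem_sdiff, star_mix, Finset.mem_image]
    refine ⟨⟨l, Finset.mem_union.mpr (Or.inl hl), rfl⟩, ?_⟩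
    intro hp
    exact (Finset.disjoint_left.mp (disj_pure_prime h hgg)) hp
      (mem_PrimeE.mpr (Or.inr (Or.inr ⟨l, hl, rfl⟩)))

lemma span_medge {a c g : ℕ} (h : 0 < g) (hgg : g = gg a c) {l : ℕ} (hl : l < 2*mu a c) :
    pairSpan g (medge a c g h l) = 2*mu a c - l := by
  obtain ⟨e1,e2,e3,e4,e5,e6,e7⟩ := basics a c
  rw [medge, span_vv h (by omega) (by omega)]
  omega

lemma mixed_counts {a c g : ℕ} (h : 0 < g) (hgg : g = gg a c) :
    (starEdgeSet (FF g h (mixS a c)) ∩ PureE a c g h).card = a+c+2 ∧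
    (starEdgeSet (FF g h (mixS a c)) \ PureE a c g h).card = a+c+1 ∧
    ((starEdgeSet (FF g h (mixS a c)) \ PureE a c g h).filter
      (fun e => IsBackwardEdge g e)).card = a+1 ∧
    ((starEdgeSet (FF g h (mixS a c)) \ PureE a c g h).filter
      (fun e => IsForwardEdge g e)).card = c := by
  obtain ⟨e1,e2,e3,e4,e5,e6,e7⟩ := basics a c
  have hbP : ∀ l ∈ mixPure a c, l < 2*mu a c := fun l hl => (mixPure_range hl).2.1
  have hbB : ∀ l ∈ mixBack a c, l < mu a c := by
    intro l hl
    simp only [mixBack, Finset.mem_Ico] at hl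
    omega
  have hbF : ∀ l ∈ mixFwd a c, mu a c ≤ l ∧ l < 2*mu a c := by
    intro l hl
    simp only [mixFwd, Finset.mem_Ico] at hl
    omega
  have hbBF : ∀ l ∈ mixBack a c ∪ mixFwd a c, l < 2*mu a c := by
    intro l hl
    rw [Finset.mem_union] at hl
    rcases hl with hl | hl
    · have := hbB l hl; omega
    · exact (hbF l hl).2
  have himg : (mixBack a c ∪ mixFwd a c).image (medge a c g h)
      = (mixBack a c).image (medge a c g h) ∪ (mixFwd a c).image (medge a c g h) :=
    Finset.image_union _ _
  have hBall : ∀ e ∈ (mixBack a c).image (medge a c g h),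
      IsBackwardEdge g e ∧ ¬ IsForwardEdge g e := by
    intro e he
    rw [Finset.mem_image] at he
    obtain ⟨l, hl, rfl⟩ := he
    obtain ⟨_, hb, hf⟩ := diff_medge_bwd h hgg (hbB l hl)
    exact ⟨hb, hf⟩
  have hFall : ∀ e ∈ (mixFwd a c).image (medge a c g h),
      IsForwardEdge g e ∧ ¬ IsBackwardEdge g e := by
    intro e he
    rw [Finset.mem_image] at he
    obtain ⟨l, hl, rfl⟩ := he
    obtain ⟨hd, hf⟩ := diff_medge_fwd h hgg (hbF l hl).1 (hbF l hl).2
    refine ⟨hf, ?_⟩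
    intro hb
    rw [IsBackwardEdge, span_medge h hgg (hbF l hl).2] at hb
    have := (hbF l hl).1
    omega
  have hdisjimg : Disjoint ((mixBack a c).image (medge a c g h))
      ((mixFwd a c).image (medge a c g h)) := by
    rw [Finset.disjoint_left]
    intro e heB heF
    exact (hFall e heF).2 (hBall e heB).1
  have cardB : ((mixBack a c).image (medge a c g h)).card = a+1 := by
    rw [Finset.card_image_of_injOn (medge_injOn h hgg (fun l hl => by
      have := hbB l hl; omega))]
    simp [mixBack]
    omega
  have cardF : ((mixFwd a c).image (medge a c g h)).card = c := by
    rw [Finset.card_image_of_injOn (medge_injOn h hgg (fun l hl => (hbF l hl).2))]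
    simp [mixFwd]
  refine ⟨?_, ?_, ?_, ?_⟩
  · rw [mix_inter h hgg, Finset.card_image_of_injOn (medge_injOn h hgg hbP), card_mixPure]
    omega
  · rw [mix_sdiff h hgg, Finset.card_image_of_injOn (medge_injOn h hgg hbBF),
      Finset.card_union_of_disjoint (disj_B_F a c)]
    simp [mixBack, mixFwd]
    omega
  · rw [mix_sdiff h hgg, himg, Finset.filter_union]
    rw [Finset.filter_true_of_mem (fun e he => (hBall e he).1),
      Finset.filter_false_of_mem (fun e he => (hFall e he).2)]
    rw [Finset.union_empty]
    exact cardB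
  · rw [mix_sdiff h hgg, himg, Finset.filter_union]
    rw [Finset.filter_false_of_mem (fun e he => (hBall e he).2),
      Finset.filter_true_of_mem (fun e he => (hFall e he).1)]
    rw [Finset.empty_union]
    exact cardF

lemma mix_is_mixed {a c g : ℕ} (h : 0 < g) (hgg : g = gg a c) :
    IsMixedStar g (PureE a c g h) (FF g h (mixS a c)) := by
  obtain ⟨e1,e2,e3,e4,e5,e6,e7⟩ := basics a c
  constructor
  · rw [mix_inter h hgg]
    refine ⟨medge a c g h (mu a c), Finset.mem_image.mpr ⟨mu a c, ?_, rfl⟩⟩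
    simp only [mixPure, Finset.mem_union, Finset.mem_Ico]
    exact Or.inl ⟨le_refl _, by omega⟩
  · rw [mix_sdiff h hgg]
    refine ⟨medge a c g h (nn a c*(c+1)+c+1), Finset.mem_image.mpr ⟨_, ?_, rfl⟩⟩
    rw [Finset.mem_union]
    left
    simp only [mixBack, Finset.mem_Ico]
    omega

lemma mixed_unique {a c g : ℕ} (h : 0 < g) (hgg : g = gg a c) :
    ∃! p, p ∈ PP a c g h ∧ IsMixedStar g (PureE a c g h) p := by
  obtain ⟨e1,e2,e3,e4,e5,e6,e7⟩ := basics a c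
  refine ⟨FF g h (mixS a c),
    ⟨mem_PP.mpr (Or.inr (Or.inr (Or.inr rfl))), mix_is_mixed h hgg⟩, ?_⟩
  rintro p ⟨hp, hmix⟩
  rw [mem_PP] at hp
  rcases hp with ⟨s, hs, he⟩ | ⟨u, hu, he⟩ | he | he
  · exfalso
    obtain ⟨e, hesd⟩ := hmix.2
    rw [Finset.mem_sdiff, ← he] at hesd
    exact hesd.2 (Finset.mem_union.mpr (Or.inl (Finset.mem_biUnion.mpr
      ⟨s, Finset.mem_range.mpr (by omega), hesd.1⟩)))
  · exfalso
    obtain ⟨e, hein⟩ := hmix.1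
    rw [Finset.mem_inter, ← he] at hein
    have hepr : e ∈ PrimeE a c g h := Finset.mem_union.mpr (Or.inl
      (Finset.mem_union.mpr (Or.inl (Finset.mem_biUnion.mpr
        ⟨u, Finset.mem_range.mpr hu, hein.1⟩))))
    exact (Finset.disjoint_left.mp (disj_pure_prime h hgg)) hein.2 hepr
  · exfalso
    obtain ⟨e, hein⟩ := hmix.1
    rw [Finset.mem_inter, he] at hein
    have hepr : e ∈ PrimeE a c g h := Finset.mem_union.mpr (Or.inl
      (Finset.mem_union.mpr (Or.inr hein.1)))
    exact (Finset.disjoint_left.mp (disj_pure_prime h hgg)) hein.2 hepr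
  · exact he

/-! ## master theorem -/

theorem master (a c g : ℕ) (h : 0 < g) (hgg : g = gg a c) :
    ∃ (P : Finset (Fin g × Finset (Fin g))) (Pure : Finset (Sym2 (Fin g))),
      IsAlmostStarFactor (nn a c) g (2*a+3) P ∧
      IsAdmissibleLabeling g (factorEdges g P) Pure ∧
      (∀ d, 1 ≤ d → d ≤ mu a c → ∃ e ∈ Pure, pairDiff g e = d ∧ IsForwardEdge g e) ∧
      (∀ d, 1 ≤ d → d ≤ mu a c →
        ((factorEdges g P).filter (fun e => pairDiff g e = d)).card ≤ 2) ∧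
      (∃! p, p ∈ P ∧ IsMixedStar g Pure p) ∧
      (∀ p ∈ P, IsMixedStar g Pure p →
        (starEdgeSet p ∩ Pure).card = a+c+2 ∧
        (starEdgeSet p \ Pure).card = a+c+1 ∧
        ((starEdgeSet p \ Pure).filter (fun e => IsBackwardEdge g e)).card = a+1 ∧
        ((starEdgeSet p \ Pure).filter (fun e => IsForwardEdge g e)).card = c) := by
  refine ⟨PP a c g h, PureE a c g h, almost_factor h hgg, admissible h hgg,
    (fun d h1 h2 => pure_surj h hgg d h1 h2), (fun d _ _ => two_bound h hgg d),
    mixed_unique h hgg, ?_⟩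
  intro p hp hmix
  obtain ⟨p₀, hp₀, huniq⟩ := mixed_unique h hgg
  have hpe : p = FF g h (mixS a c) := by
    rw [huniq p ⟨hp, hmix⟩, huniq (FF g h (mixS a c))
      ⟨mem_PP.mpr (Or.inr (Or.inr (Or.inr rfl))), mix_is_mixed h hgg⟩]
  subst hpe
  exact mixed_counts h hgg

end L4


/-- Lemma 4 (1 ≤ k ≤ q): for odd `n = 2q+1 > 1`, `g = 2nk + n + 2`, `μ = (2nk+n+1)/2`
and `w ≡ μ+1 (mod n+1)` with `1 ≤ w ≤ n+1`, there is an almost `n`-star factor on `Z_g`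
with an admissible pure/prime labeling such that every difference `d ∈ {1, …, μ}` is
realized by its pure edge, which is forward, and by at most two edges overall; there is
exactly one mixed star, having `q+1` pure edges and `q` prime edges of which `w-1` are
backward and `q-(w-1)` are forward; and the little star has `t-1` leaves. -/
theorem almost_factor_small_k (n q k : ℕ) (hq : n = 2 * q + 1) (hn : 1 < n)
    (hk1 : 1 ≤ k) (hk2 : k ≤ q)
    (g : ℕ) (hg : g = 2 * n * k + n + 2)
    (μ : ℕ) (hμ : 2 * μ = 2 * n * k + n + 1)
    (w : ℕ) (hw1 : 1 ≤ w) (hw2 : w ≤ n + 1) (hw : w ≡ μ + 1 [MOD n + 1])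
    (t : ℕ) (ht1 : t ≤ n) (ht2 : t ≡ g [MOD n + 1]) :
    ∃ (P : Finset (Fin g × Finset (Fin g))) (Pure : Finset (Sym2 (Fin g))),
      IsAlmostStarFactor n g t P ∧
      IsAdmissibleLabeling g (factorEdges g P) Pure ∧
      (∀ d, 1 ≤ d → d ≤ μ → ∃ e ∈ Pure, pairDiff g e = d ∧ IsForwardEdge g e) ∧
      (∀ d, 1 ≤ d → d ≤ μ →
        ((factorEdges g P).filter (fun e => pairDiff g e = d)).card ≤ 2) ∧
      (∃! p, p ∈ P ∧ IsMixedStar g Pure p) ∧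
      (∀ p ∈ P, IsMixedStar g Pure p →
        (starEdgeSet p ∩ Pure).card = q + 1 ∧
        (starEdgeSet p \ Pure).card = q ∧
        ((starEdgeSet p \ Pure).filter (fun e => IsBackwardEdge g e)).card = w - 1 ∧
        ((starEdgeSet p \ Pure).filter (fun e => IsForwardEdge g e)).card
          = q - (w - 1)) := by
  subst hq
  obtain ⟨c, rfl⟩ : ∃ c, k = c+1 := ⟨k-1, by omega⟩
  obtain ⟨a, rfl⟩ : ∃ a, q = a+c+1 := ⟨q-c-1, by omega⟩
  have hgg : g = L4.gg a c := by rw [hg]; simp only [L4.gg, L4.nn]; ring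
  have h0 : 0 < g := by rw [hg]; omega
  have hmu : μ = L4.mu a c := by
    have h2 : 2*L4.mu a c = 2*(2*(a+c+1)+1)*(c+1)+(2*(a+c+1)+1)+1 := by
      simp only [L4.mu, L4.nn]; ring
    omega
  have ht : t = 2*a+3 := by
    have hdec : g = (2*a+3) + (2*c+2)*(2*(a+c+1)+1+1) := by rw [hg]; ring
    have ht2' : t % (2*(a+c+1)+1+1) = g % (2*(a+c+1)+1+1) := ht2
    rw [hdec, Nat.add_mul_mod_self_right,
      Nat.mod_eq_of_lt (show 2*a+3 < 2*(a+c+1)+1+1 by omega),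
      Nat.mod_eq_of_lt (show t < 2*(a+c+1)+1+1 by omega)] at ht2'
    exact ht2'
  have hwv : w = a+2 := by
    have h1 : μ + 1 = (a+2) + (c+1)*(2*(a+c+1)+1+1) := by
      rw [hmu]; simp only [L4.mu, L4.nn]; ring
    have hw' : w % (2*(a+c+1)+1+1) = (μ+1) % (2*(a+c+1)+1+1) := hw
    rw [h1, Nat.add_mul_mod_self_right,
      Nat.mod_eq_of_lt (show a+2 < 2*(a+c+1)+1+1 by omega)] at hw'
    rcases eq_or_lt_of_le hw2 with he | hlt
    · exfalso
      rw [he, Nat.mod_self] at hw'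
      omega
    · rw [Nat.mod_eq_of_lt hlt] at hw'
      exact hw'
  subst hmu
  subst ht
  subst hwv
  obtain ⟨P, Pure, hA, hB, hC, hD, hE, hF⟩ := L4.master a c g h0 hgg
  refine ⟨P, Pure, ?_, hB, hC, hD, hE, ?_⟩
  · have hnn : L4.nn a c = 2*(a+c+1)+1 := by simp only [L4.nn]; ring
    rw [← hnn]
    exact hA
  · intro p hp hmix
    obtain ⟨c1, c2, c3, c4⟩ := hF p hp hmix
    exact ⟨by omega, by omega, by omega, by omega⟩
end

section
/- Let n > 1 be odd and let g = 2n+2. There exist two vertex-disjoint n-stars on Z_g whose vertex sets partition Z_g (an almost n-star factor with no little star, since t = 0) such that every difference d ∈ {1,…,n} is realized at least once by a forward edge of the factor and is realized by at most two edges of the factor. -/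
/-- Lemma 6 (k = 1, even case): for odd `n > 1` and `g = 2n + 2`, there are two
vertex-disjoint `n`-stars partitioning `Z_g` (an almost `n`-star factor with no little
star, since `t = 0`) such that every difference `d ∈ {1, …, n}` is realized at least
once by a forward edge and at most twice overall. -/
theorem almost_factor_even_k_one (n : ℕ) (hn : 1 < n) (hodd : Odd n)
    (g : ℕ) (hg : g = 2 * n + 2) :
    ∃ P : Finset (Fin g × Finset (Fin g)),
      IsAlmostStarFactor n g 0 P ∧ P.card = 2 ∧
      (∀ d, 1 ≤ d → d ≤ n →
        ∃ e ∈ factorEdges g P, pairDiff g e = d ∧ IsForwardEdge g e) ∧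
      (∀ d, 1 ≤ d → d ≤ n →
        ((factorEdges g P).filter (fun e => pairDiff g e = d)).card ≤ 2) := by
  subst hg
  have hA : ∀ m ∈ Finset.Icc 1 n, m < 2 * n + 2 := by
    intro m hm; simp [Finset.mem_Icc] at hm; omega
  have hB : ∀ m ∈ Finset.Icc (n + 2) (2 * n + 1), m < 2 * n + 2 := by
    intro m hm; simp [Finset.mem_Icc] at hm; omega
  set A : Finset (Fin (2 * n + 2)) := (Finset.Icc 1 n).attachFin hA with hAdef
  set B : Finset (Fin (2 * n + 2)) := (Finset.Icc (n + 2) (2 * n + 1)).attachFin hB with hBdef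
  have memA : ∀ x : Fin (2 * n + 2), x ∈ A ↔ 1 ≤ x.val ∧ x.val ≤ n := by
    intro x; simp [hAdef, Finset.mem_attachFin, Finset.mem_Icc]
  have memB : ∀ x : Fin (2 * n + 2), x ∈ B ↔ n + 2 ≤ x.val ∧ x.val ≤ 2 * n + 1 := by
    intro x; simp [hBdef, Finset.mem_attachFin, Finset.mem_Icc]
  set c0 : Fin (2 * n + 2) := ⟨0, by omega⟩ with hc0
  set c1 : Fin (2 * n + 2) := ⟨n + 1, by omega⟩ with hc1
  have hne : (c0, A) ≠ (c1, B) := by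
    intro h
    have := congrArg (fun p => (Prod.fst p).val) h
    simp [hc0, hc1] at this
  -- diff computation for edges from c0 and c1
  have diff01 : ∀ v : Fin (2 * n + 2), v.val ≤ n →
      pairDiff (2 * n + 2) s(c0, v) = v.val ∧ IsForwardEdge (2 * n + 2) s(c0, v) := by
    intro v hv
    have hspan : pairSpan (2 * n + 2) s(c0, v) = v.val := by
      show max c0.val v.val - min c0.val v.val = v.val
      simp [hc0]
    constructor
    · show min _ _ = _
      rw [hspan]; omega
    · show min _ _ = pairSpan _ _
      rw [hspan]; omega
  have diff11 : ∀ v : Fin (2 * n + 2), n + 1 ≤ v.val → v.val ≤ 2 * n + 1 →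
      pairDiff (2 * n + 2) s(c1, v) = v.val - (n + 1) ∧ IsForwardEdge (2 * n + 2) s(c1, v) := by
    intro v hv1 hv2
    have hspan : pairSpan (2 * n + 2) s(c1, v) = v.val - (n + 1) := by
      show max c1.val v.val - min c1.val v.val = v.val - (n + 1)
      simp [hc1]; omega
    constructor
    · show min _ _ = _
      rw [hspan]; omega
    · show min _ _ = pairSpan _ _
      rw [hspan]; omega
  refine ⟨{(c0, A), (c1, B)}, ⟨?_, ?_, ?_⟩, ?_, ?_, ?_⟩
  · -- centers not leaves
    intro p hp
    simp only [Finset.mem_insert, Finset.mem_singleton] at hp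
    rcases hp with rfl | rfl
    · simp only [memA, hc0]; omega
    · simp only [memB, hc1]; omega
  · -- partition
    intro x
    by_cases hx : x.val ≤ n
    · refine ⟨(c0, A), ⟨by simp, ?_⟩, ?_⟩
      · by_cases h0 : x.val = 0
        · left; exact Fin.ext h0
        · right; rw [memA]; omega
      · rintro q ⟨hq, hq2⟩
        simp only [Finset.mem_insert, Finset.mem_singleton] at hq
        rcases hq with rfl | rfl
        · rfl
        · exfalso
          rcases hq2 with h | h
          · have := congrArg Fin.val h; simp [hc1] at this; omega
          · rw [memB] at h; omega
    · refine ⟨(c1, B), ⟨by simp, ?_⟩, ?_⟩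
      · by_cases h0 : x.val = n + 1
        · left; exact Fin.ext h0
        · right; rw [memB]; have := x.isLt; omega
      · rintro q ⟨hq, hq2⟩
        simp only [Finset.mem_insert, Finset.mem_singleton] at hq
        rcases hq with rfl | rfl
        · exfalso
          rcases hq2 with h | h
          · exact hx (by rw [h]; simp [hc0])
          · rw [memA] at h; omega
        · rfl
  · -- cards
    simp only [if_pos rfl]
    intro p hp
    simp only [Finset.mem_insert, Finset.mem_singleton] at hp
    rcases hp with rfl | rfl
    · simp [hAdef, Finset.card_attachFin, Nat.card_Icc]
    · simp [hBdef, Finset.card_attachFin, Nat.card_Icc]; omega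
  · -- card P = 2
    rw [Finset.card_insert_of_notMem (by simpa using hne), Finset.card_singleton]
  · -- each difference realized forward
    intro d hd1 hd2
    refine ⟨s(c0, ⟨d, by omega⟩), ?_, ?_⟩
    · simp only [factorEdges, Finset.mem_biUnion]
      refine ⟨(c0, A), by simp, ?_⟩
      simp only [starEdgeSet, Finset.mem_image]
      exact ⟨⟨d, by omega⟩, by rw [memA]; exact ⟨hd1, hd2⟩, rfl⟩
    · obtain ⟨h1, h2⟩ := diff01 ⟨d, by omega⟩ hd2
      exact ⟨h1, h2⟩
  · -- at most two edges of each difference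
    intro d hd1 hd2
    have hsub : ((factorEdges (2 * n + 2) {(c0, A), (c1, B)}).filter
        (fun e => pairDiff (2 * n + 2) e = d)) ⊆
        {s(c0, (⟨d, by omega⟩ : Fin (2 * n + 2))), s(c1, ⟨n + 1 + d, by omega⟩)} := by
      intro e he
      rw [Finset.mem_filter] at he
      obtain ⟨hmem, hdiff⟩ := he
      simp only [factorEdges, Finset.mem_biUnion, Finset.mem_insert,
        Finset.mem_singleton] at hmem
      obtain ⟨p, hp, hep⟩ := hmem
      simp only [starEdgeSet, Finset.mem_image] at hep
      obtain ⟨l, hl, rfl⟩ := hep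
      rcases hp with rfl | rfl
      · rw [memA] at hl
        have hdiff' : pairDiff (2 * n + 2) s(c0, l) = d := hdiff
        rw [(diff01 l hl.2).1] at hdiff'
        have hld : l = ⟨d, by omega⟩ := Fin.ext hdiff'
        exact Finset.mem_insert.mpr (Or.inl (congrArg (fun x => s(c0, x)) hld))
      · rw [memB] at hl
        have hdiff' : pairDiff (2 * n + 2) s(c1, l) = d := hdiff
        rw [(diff11 l (by omega) hl.2).1] at hdiff'
        have hld : l = ⟨n + 1 + d, by omega⟩ := Fin.ext (by show l.val = n + 1 + d; omega)
        exact Finset.mem_insert.mpr (Or.inr (Finset.mem_singleton.mpr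
          (congrArg (fun x => s(c1, x)) hld)))
    refine (Finset.card_le_card hsub).trans ?_
    exact (Finset.card_insert_le _ _).trans (by simp)
end

section
/- Let n > 1 be odd, let k' ≥ 1 be an integer, and let v = n(n+1)k' + 2(n+1). Then the complete graph K_v contains v/(n+1) pairwise edge-disjoint K_{1,n}-factors. -/
section StarConstruction

variable {V : Type*} [Fintype V] [DecidableEq V]

/-- The star family with shift `s`: for each group `j`, a star with center `(0, j)`
and leaves all vertices of level `≠ 0` in group `j + s`. -/
def starFam (n m : ℕ) [NeZero m] (e : V ≃ Fin (n + 1) × ZMod m) (s : ZMod m) :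
    Finset (V × Finset V) :=
  Finset.univ.image (fun j : ZMod m =>
    (e.symm (0, j), (Finset.univ.erase (0 : Fin (n + 1))).image (fun a => e.symm (a, j + s))))

lemma starFam_isFamily (n m : ℕ) [NeZero m] (e : V ≃ Fin (n + 1) × ZMod m) (s : ZMod m) :
    IsStarFactorFamily n (starFam n m e s) := by
  have einj : ∀ (j : ZMod m), Function.Injective (fun a : Fin (n+1) => e.symm (a, j)) := by
    intro j a b h
    exact (Prod.ext_iff.mp (e.symm.injective h)).1
  constructor
  · intro p hp
    simp only [starFam, Finset.mem_image, Finset.mem_univ, true_and] at hp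
    obtain ⟨j, rfl⟩ := hp
    refine ⟨?_, ?_⟩
    · rw [Finset.card_image_of_injective _ (einj (j + s))]
      simp
    · intro hmem
      simp only [Finset.mem_image, Finset.mem_erase, Finset.mem_univ, and_true] at hmem
      obtain ⟨a, ha, heq⟩ := hmem
      exact ha (Prod.ext_iff.mp (e.symm.injective heq)).1
  · intro x
    obtain ⟨⟨a, j0⟩, hx⟩ : ∃ y, e.symm y = x := ⟨e x, e.symm_apply_apply x⟩
    by_cases ha : a = 0
    · subst ha
      refine ⟨(e.symm (0, j0),
          (Finset.univ.erase (0 : Fin (n+1))).image (fun b => e.symm (b, j0 + s))),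
        ⟨?_, Or.inl hx.symm⟩, ?_⟩
      · simp only [starFam, Finset.mem_image, Finset.mem_univ, true_and]
        exact ⟨j0, rfl⟩
      · rintro q ⟨hq, hxq⟩
        simp only [starFam, Finset.mem_image, Finset.mem_univ, true_and] at hq
        obtain ⟨j, rfl⟩ := hq
        rcases hxq with h | h
        · have h2 : e.symm ((0 : Fin (n+1)), j) = e.symm (0, j0) := by rw [hx, h]
          have hj : j = j0 := (Prod.ext_iff.mp (e.symm.injective h2)).2
          rw [hj]
        · simp only [Finset.mem_image, Finset.mem_erase, Finset.mem_univ, and_true] at h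
          obtain ⟨b, hb, hbx⟩ := h
          have h2 : e.symm (b, j + s) = e.symm ((0 : Fin (n+1)), j0) := by rw [hbx, hx]
          exact absurd (Prod.ext_iff.mp (e.symm.injective h2)).1 hb
    · refine ⟨(e.symm (0, j0 - s),
          (Finset.univ.erase (0 : Fin (n+1))).image (fun b => e.symm (b, (j0 - s) + s))),
        ⟨?_, Or.inr ?_⟩, ?_⟩
      · simp only [starFam, Finset.mem_image, Finset.mem_univ, true_and]
        exact ⟨j0 - s, rfl⟩
      · simp only [Finset.mem_image, Finset.mem_erase, Finset.mem_univ, and_true]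
        exact ⟨a, ha, by rw [sub_add_cancel]; exact hx⟩
      · rintro q ⟨hq, hxq⟩
        simp only [starFam, Finset.mem_image, Finset.mem_univ, true_and] at hq
        obtain ⟨j, rfl⟩ := hq
        rcases hxq with h | h
        · have h2 : e.symm ((0 : Fin (n+1)), j) = e.symm (a, j0) := by rw [hx, h]
          exact absurd (Prod.ext_iff.mp (e.symm.injective h2)).1.symm ha
        · simp only [Finset.mem_image, Finset.mem_erase, Finset.mem_univ, and_true] at h
          obtain ⟨b, hb, hbx⟩ := h
          have h2 : e.symm (b, j + s) = e.symm (a, j0) := by rw [hbx, hx]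
          have hj : j + s = j0 := (Prod.ext_iff.mp (e.symm.injective h2)).2
          have : j = j0 - s := eq_sub_of_add_eq hj
          rw [this]

lemma starFam_disjoint (n m : ℕ) [NeZero m] (e : V ≃ Fin (n + 1) × ZMod m) {s t : ZMod m}
    (hst : s ≠ t) :
    Disjoint ((starFam n m e s).biUnion starEdgeSet)
      ((starFam n m e t).biUnion starEdgeSet) := by
  rw [Finset.disjoint_left]
  intro ed h1 h2
  obtain ⟨p, hp, hep⟩ := Finset.mem_biUnion.mp h1
  simp only [starFam, Finset.mem_image, Finset.mem_univ, true_and] at hp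
  obtain ⟨j, rfl⟩ := hp
  simp only [starEdgeSet, Finset.mem_image, Finset.mem_erase, Finset.mem_univ, and_true] at hep
  obtain ⟨l, ⟨a, ha, rfl⟩, hed⟩ := hep
  obtain ⟨p, hp, hep⟩ := Finset.mem_biUnion.mp h2
  simp only [starFam, Finset.mem_image, Finset.mem_univ, true_and] at hp
  obtain ⟨j', rfl⟩ := hp
  simp only [starEdgeSet, Finset.mem_image, Finset.mem_erase, Finset.mem_univ, and_true] at hep
  obtain ⟨l, ⟨b, hb, rfl⟩, hed'⟩ := hep
  rw [← hed'] at hed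
  rw [Sym2.eq_iff] at hed
  rcases hed with ⟨hc, hl⟩ | ⟨hc, hl⟩
  · have hj : j = j' := (Prod.ext_iff.mp (e.symm.injective hc)).2
    have hl2 : j + s = j' + t := (Prod.ext_iff.mp (e.symm.injective hl)).2
    rw [hj] at hl2
    exact hst (add_left_cancel hl2)
  · exact hb (Prod.ext_iff.mp (e.symm.injective hc)).1.symm

end StarConstruction

/-- Part I factors: for odd `n > 1` and `v = n(n+1)k' + 2(n+1)` with `k' ≥ 1`, the
complete graph `K_v` contains `v/(n+1)` pairwise edge-disjoint `K_{1,n}`-factors. -/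
theorem part_one_factors (n : ℕ) (hn : 1 < n) (hodd : Odd n) (k' : ℕ) (hk : 1 ≤ k')
    (v : ℕ) (hv : v = n * (n + 1) * k' + 2 * (n + 1)) :
    ∃ F : Fin (v / (n + 1)) → Finset (Sym2 (Fin v)),
      (∀ i, IsStarFactor n (F i)) ∧
      ∀ i j, i ≠ j → Disjoint (F i) (F j) := by
  have hm : v = (n + 1) * (n * k' + 2) := by subst hv; ring
  set m := n * k' + 2 with hmdef
  haveI : NeZero m := ⟨by omega⟩
  have hdiv : v / (n + 1) = m := by rw [hm]; exact Nat.mul_div_cancel_left _ (by omega)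
  let e3 : Fin m ≃ ZMod m := (Fintype.equivFinOfCardEq (ZMod.card m)).symm
  let e : Fin v ≃ Fin (n + 1) × ZMod m :=
    (finCongr hm).trans (finProdFinEquiv.symm.trans ((Equiv.refl (Fin (n + 1))).prodCongr e3))
  refine ⟨fun i => (starFam n m e (e3 (finCongr hdiv i))).biUnion starEdgeSet,
    fun i => ⟨_, starFam_isFamily n m e _, rfl⟩,
    fun i j hij => starFam_disjoint n m e ?_⟩
  intro h
  exact hij ((finCongr hdiv).injective (e3.injective h))
end

section
/- For every odd integer n ≥ 3, a (K_2,K_{1,n})-URD(2(n+1); 1, n+1) exists; that is, the edge set of the complete graph K_{2(n+1)} can be partitioned into one perfect matching and n+1 K_{1,n}-factors. -/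
namespace URDAux

variable (n : ℕ)

abbrev V := Fin (2 * (n + 1))

/-- class of a vertex -/
def cl (x : V n) : ℕ := x.val % (n + 1)
/-- side of a vertex -/
def sd (x : V n) : ℕ := x.val / (n + 1)

lemma cl_lt (x : V n) : cl n x < n + 1 := Nat.mod_lt _ (by omega)

lemma sd_lt (x : V n) : sd n x < 2 := by
  have h := x.isLt
  exact Nat.div_lt_of_lt_mul (by omega)

lemma val_decomp (x : V n) : x.val = cl n x + sd n x * (n + 1) :=
  (Nat.mod_add_div' _ _).symm

lemma veq {x y : V n} (h1 : cl n x = cl n y) (h2 : sd n x = sd n y) : x = y :=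
  Fin.ext (by rw [val_decomp n x, val_decomp n y, h1, h2])

/-- make a vertex from class `c` and side `s` -/
def mkv (c s : ℕ) (hc : c < n + 1) (hs : s < 2) : V n :=
  ⟨c + s * (n + 1), by
    have : s * (n + 1) ≤ 1 * (n + 1) := Nat.mul_le_mul_right _ (by omega)
    omega⟩

lemma cl_mkv (c s : ℕ) (hc : c < n + 1) (hs : s < 2) : cl n (mkv n c s hc hs) = c := by
  simp only [cl, mkv, Nat.add_mul_mod_self_right]
  exact Nat.mod_eq_of_lt hc

lemma sd_mkv (c s : ℕ) (hc : c < n + 1) (hs : s < 2) : sd n (mkv n c s hc hs) = s := by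
  simp only [sd, mkv]
  rw [Nat.add_mul_div_right _ _ (by omega : 0 < n + 1), Nat.div_eq_of_lt hc, Nat.zero_add]

def c0 (j : Fin (n + 1)) : V n := mkv n j.val 0 j.isLt (by omega)
def c1 (j : Fin (n + 1)) : V n := mkv n j.val 1 j.isLt (by omega)

lemma cl_c0 (j : Fin (n + 1)) : cl n (c0 n j) = j.val := cl_mkv n _ _ _ _
lemma sd_c0 (j : Fin (n + 1)) : sd n (c0 n j) = 0 := sd_mkv n _ _ _ _
lemma cl_c1 (j : Fin (n + 1)) : cl n (c1 n j) = j.val := cl_mkv n _ _ _ _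
lemma sd_c1 (j : Fin (n + 1)) : sd n (c1 n j) = 1 := sd_mkv n _ _ _ _

lemma c0_ne_c1 (j : Fin (n + 1)) : c0 n j ≠ c1 n j := by
  intro h
  have := congrArg (sd n) h
  rw [sd_c0, sd_c1] at this
  omega

lemma center_cases {j : Fin (n + 1)} {x : V n} (h : cl n x = j.val) :
    x = c0 n j ∨ x = c1 n j := by
  have hs := sd_lt n x
  interval_cases hsx : sd n x
  · exact Or.inl (veq n (by rw [h, cl_c0]) (by rw [sd_c0]; omega))
  · exact Or.inr (veq n (by rw [h, cl_c1]) (by rw [sd_c1]; omega))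

/-- ownership: edge `{x,y}` belongs to the star centered at `x` -/
def own (x y : V n) : Prop :=
  cl n x ≠ cl n y ∧
    ((sd n x = sd n y ∧ cl n x < cl n y) ∨ (sd n x ≠ sd n y ∧ cl n y < cl n x))

instance (x : V n) : DecidablePred (own n x) := fun y => by
  unfold own; infer_instance

lemma own_not_both {x y : V n} : ¬ (own n x y ∧ own n y x) := by
  unfold own; omega

lemma own_total {x y : V n} (h : cl n x ≠ cl n y) : own n x y ∨ own n y x := by
  unfold own; omega

lemma own_irrefl (x : V n) : ¬ own n x x := by unfold own; omega

def leaves (x : V n) : Finset (V n) := Finset.univ.filter (own n x)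

lemma mem_leaves {x y : V n} : y ∈ leaves n x ↔ own n x y := by
  simp [leaves]

lemma leaves_card (x : V n) : (leaves n x).card = n := by
  have h : (leaves n x).card = ((Finset.range (n + 1)).erase (cl n x)).card := by
    apply Finset.card_bij (fun y _ => cl n y)
    · intro a ha
      rw [Finset.mem_erase, Finset.mem_range]
      have h1 := (mem_leaves n).1 ha
      exact ⟨fun hc => h1.1 hc.symm, cl_lt n a⟩
    · intro a ha b hb hab
      have ha' := (mem_leaves n).1 ha
      have hb' := (mem_leaves n).1 hb
      refine veq n hab ?_
      unfold own at ha' hb'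
      have := sd_lt n a; have := sd_lt n b; have := sd_lt n x
      omega
    · intro b hb
      rw [Finset.mem_erase, Finset.mem_range] at hb
      refine ⟨mkv n b (if cl n x < b then sd n x else 1 - sd n x) hb.2
        (by have := sd_lt n x; split <;> omega), ?_, ?_⟩
      · rw [mem_leaves]
        have hcl := cl_mkv n b (if cl n x < b then sd n x else 1 - sd n x) hb.2
          (by have := sd_lt n x; split <;> omega)
        have hsd := sd_mkv n b (if cl n x < b then sd n x else 1 - sd n x) hb.2
          (by have := sd_lt n x; split <;> omega)
        unfold own
        rw [hcl, hsd]
        have := sd_lt n x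
        split <;> omega
      · exact cl_mkv n b _ hb.2 (by have := sd_lt n x; split <;> omega)
  rw [h, Finset.card_erase_of_mem (by rw [Finset.mem_range]; exact cl_lt n x),
    Finset.card_range]
  omega

/-- the two stars of factor `j` -/
def P (j : Fin (n + 1)) : Finset (V n × Finset (V n)) :=
  {(c0 n j, leaves n (c0 n j)), (c1 n j, leaves n (c1 n j))}

lemma mem_P {j : Fin (n + 1)} {p : V n × Finset (V n)} :
    p ∈ P n j ↔ p = (c0 n j, leaves n (c0 n j)) ∨ p = (c1 n j, leaves n (c1 n j)) := by
  simp [P]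

lemma own_c_cases {j : Fin (n + 1)} {x : V n} (h : cl n x ≠ j.val) :
    (own n (c0 n j) x ∧ ¬ own n (c1 n j) x) ∨ (own n (c1 n j) x ∧ ¬ own n (c0 n j) x) := by
  have h0 := cl_c0 n j; have h1 := cl_c1 n j
  have s0 := sd_c0 n j; have s1 := sd_c1 n j
  have := sd_lt n x
  unfold own
  rw [h0, h1, s0, s1]
  omega

lemma star_family (j : Fin (n + 1)) : IsStarFactorFamily n (P n j) := by
  constructor
  · intro p hp
    rcases (mem_P n).1 hp with h | h <;> subst h <;>
      exact ⟨leaves_card n _, fun hc => own_irrefl n _ ((mem_leaves n).1 hc)⟩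
  · intro x
    by_cases hx : cl n x = j.val
    · rcases center_cases n hx with hc | hc
      · refine ⟨(c0 n j, leaves n (c0 n j)), ⟨(mem_P n).2 (Or.inl rfl), Or.inl hc⟩, ?_⟩
        rintro q ⟨hq, hq2⟩
        rcases (mem_P n).1 hq with h | h
        · exact h
        · exfalso; subst h
          rcases hq2 with h2 | h2
          · rw [hc] at h2; exact c0_ne_c1 n j h2
          · have := (mem_leaves n).1 h2
            exact this.1 (by rw [cl_c1, hx])
      · refine ⟨(c1 n j, leaves n (c1 n j)), ⟨(mem_P n).2 (Or.inr rfl), Or.inl hc⟩, ?_⟩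
        rintro q ⟨hq, hq2⟩
        rcases (mem_P n).1 hq with h | h
        · exfalso; subst h
          rcases hq2 with h2 | h2
          · rw [hc] at h2; exact c0_ne_c1 n j h2.symm
          · have := (mem_leaves n).1 h2
            exact this.1 (by rw [cl_c0, hx])
        · exact h
    · rcases own_c_cases n hx with ⟨ho, hno⟩ | ⟨ho, hno⟩
      · refine ⟨(c0 n j, leaves n (c0 n j)),
          ⟨(mem_P n).2 (Or.inl rfl), Or.inr ((mem_leaves n).2 ho)⟩, ?_⟩
        rintro q ⟨hq, hq2⟩
        rcases (mem_P n).1 hq with h | h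
        · exact h
        · exfalso; subst h
          rcases hq2 with h2 | h2
          · exact hx (by rw [h2, cl_c1])
          · exact hno ((mem_leaves n).1 h2)
      · refine ⟨(c1 n j, leaves n (c1 n j)),
          ⟨(mem_P n).2 (Or.inr rfl), Or.inr ((mem_leaves n).2 ho)⟩, ?_⟩
        rintro q ⟨hq, hq2⟩
        rcases (mem_P n).1 hq with h | h
        · exfalso; subst h
          rcases hq2 with h2 | h2
          · exact hx (by rw [h2, cl_c0])
          · exact hno ((mem_leaves n).1 h2)
        · exact h

/-- edge set of factor `j` -/
def Fedge (j : Fin (n + 1)) : Finset (Sym2 (V n)) := (P n j).biUnion starEdgeSet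

lemma mem_Fedge {j : Fin (n + 1)} {e : Sym2 (V n)} :
    e ∈ Fedge n j ↔ ∃ x l, cl n x = j.val ∧ own n x l ∧ e = s(x, l) := by
  constructor
  · intro he
    rw [Fedge, Finset.mem_biUnion] at he
    obtain ⟨p, hp, hep⟩ := he
    rw [starEdgeSet, Finset.mem_image] at hep
    obtain ⟨l, hl, hle⟩ := hep
    rcases (mem_P n).1 hp with h | h <;> subst h
    · exact ⟨c0 n j, l, cl_c0 n j, (mem_leaves n).1 hl, hle.symm⟩
    · exact ⟨c1 n j, l, cl_c1 n j, (mem_leaves n).1 hl, hle.symm⟩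
  · rintro ⟨x, l, hx, ho, rfl⟩
    rw [Fedge, Finset.mem_biUnion]
    refine ⟨(x, leaves n x), ?_, ?_⟩
    · rcases center_cases n hx with h | h <;> rw [h]
      · exact (mem_P n).2 (Or.inl rfl)
      · exact (mem_P n).2 (Or.inr rfl)
    · rw [starEdgeSet, Finset.mem_image]
      exact ⟨l, (mem_leaves n).2 ho, rfl⟩

lemma owner_unique {x l x' l' : V n} (h : own n x l) (h' : own n x' l')
    (he : s(x, l) = s(x', l')) : x = x' ∧ l = l' := by
  rw [Sym2.eq_iff] at he
  rcases he with ⟨h1, h2⟩ | ⟨h1, h2⟩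
  · exact ⟨h1, h2⟩
  · exfalso
    subst h1; subst h2
    exact own_not_both n ⟨h, h'⟩

lemma Fedge_disjoint {i j : Fin (n + 1)} (hij : i ≠ j) :
    Disjoint (Fedge n i) (Fedge n j) := by
  rw [Finset.disjoint_left]
  intro e hei hej
  obtain ⟨x, l, hx, ho, rfl⟩ := (mem_Fedge n).1 hei
  obtain ⟨x', l', hx', ho', he⟩ := (mem_Fedge n).1 hej
  have := owner_unique n ho ho' he
  apply hij
  apply Fin.ext
  rw [← hx, ← hx', this.1]

/-- the perfect matching -/
def M0 : Finset (Sym2 (V n)) :=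
  Finset.univ.image (fun j : Fin (n + 1) => s(c0 n j, c1 n j))

lemma mem_M0 {e : Sym2 (V n)} :
    e ∈ M0 n ↔ ∃ j : Fin (n + 1), e = s(c0 n j, c1 n j) := by
  simp [M0, eq_comm]

lemma oneFactor_M0 : IsOneFactor (M0 n) := by
  constructor
  · intro e he
    obtain ⟨j, rfl⟩ := (mem_M0 n).1 he
    rw [Sym2.mk_isDiag_iff]
    exact c0_ne_c1 n j
  · intro x
    set j : Fin (n + 1) := ⟨cl n x, cl_lt n x⟩ with hj
    refine ⟨s(c0 n j, c1 n j), ⟨(mem_M0 n).2 ⟨j, rfl⟩, ?_⟩, ?_⟩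
    · rw [Sym2.mem_iff]
      exact center_cases n rfl
    · rintro e ⟨he, hxe⟩
      obtain ⟨k, rfl⟩ := (mem_M0 n).1 he
      rw [Sym2.mem_iff] at hxe
      have hk : cl n x = k.val := by
        rcases hxe with h | h <;> rw [h]
        · exact cl_c0 n k
        · exact cl_c1 n k
      have : j = k := Fin.ext hk
      rw [this]

lemma M0_Fedge_disjoint (j : Fin (n + 1)) : Disjoint (M0 n) (Fedge n j) := by
  rw [Finset.disjoint_left]
  intro e hem hef
  obtain ⟨k, rfl⟩ := (mem_M0 n).1 hem
  obtain ⟨x, l, hx, ho, he⟩ := (mem_Fedge n).1 hef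
  rw [Sym2.eq_iff] at he
  have hcl : cl n x = cl n l := by
    rcases he with ⟨h1, h2⟩ | ⟨h1, h2⟩ <;>
      rw [← h1, ← h2] <;> simp [cl_c0, cl_c1]
  exact ho.1 hcl

end URDAux

/-- For every odd `n ≥ 3`, a `(K_2, K_{1,n})`-URD`(2(n+1); 1, n+1)` exists. -/
theorem urd_smallest_case (n : ℕ) (hn : 3 ≤ n) (hodd : Odd n) :
    IsURD n (2 * (n + 1)) 1 (n + 1) := by
  open URDAux in
  refine ⟨fun _ => M0 n, fun j => Fedge n j, fun _ => oneFactor_M0 n,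
    fun j => ⟨P n j, star_family n j, rfl⟩,
    fun i j h => absurd (Subsingleton.elim i j) h,
    fun i j h => Fedge_disjoint n h,
    fun _ j => M0_Fedge_disjoint n j, ?_⟩
  intro e
  constructor
  · intro he
    rw [Finset.mem_union] at he
    rcases he with he | he <;> rw [Finset.mem_biUnion] at he
    · obtain ⟨i, _, he⟩ := he
      exact (oneFactor_M0 n).1 e he
    · obtain ⟨j, _, he⟩ := he
      obtain ⟨x, l, hx, ho, rfl⟩ := (mem_Fedge n).1 he
      rw [Sym2.mk_isDiag_iff]
      intro h
      exact ho.1 (congrArg (cl n) h)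
  · induction e using Sym2.ind with
    | _ a b =>
      intro hd
      rw [Sym2.mk_isDiag_iff] at hd
      rw [Finset.mem_union]
      by_cases hcl : cl n a = cl n b
      · left
        rw [Finset.mem_biUnion]
        refine ⟨0, Finset.mem_univ _, ?_⟩
        set j : Fin (n + 1) := ⟨cl n a, cl_lt n a⟩
        have hsd : sd n a ≠ sd n b := fun h => hd (veq n hcl h)
        have ha := center_cases n (j := j) (x := a) rfl
        have hb := center_cases n (j := j) (x := b) hcl.symm
        rw [mem_M0 n]
        refine ⟨j, ?_⟩
        rcases ha with ha | ha <;> rcases hb with hb | hb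
        · exfalso; apply hsd; rw [ha, hb]
        · rw [ha, hb]
        · rw [ha, hb, Sym2.eq_swap]
        · exfalso; apply hsd; rw [ha, hb]
      · right
        rw [Finset.mem_biUnion]
        rcases own_total n hcl with ho | ho
        · exact ⟨⟨cl n a, cl_lt n a⟩, Finset.mem_univ _,
            (mem_Fedge n).2 ⟨a, b, rfl, ho, rfl⟩⟩
        · exact ⟨⟨cl n b, cl_lt n b⟩, Finset.mem_univ _,
            (mem_Fedge n).2 ⟨b, a, rfl, ho, Sym2.eq_swap⟩⟩
end
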